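/- arXiv:math/0610021 — 5 statements merged into one kernel-verified Lean document; each statement's English description precedes it below -/
import Mathlib

section
/- With notation as in the single-set orthonormal decomposition lemma: let Ω_ℓ ⊂ Y_ℓ be a subset, and suppose α: X → ℂ is square-integrable and supported on the set {x ∈ X : ρ(x) ∉ Ω_ℓ}. Then ∑_{φ∈B_ℓ*} |∫_X α(x)φ(ρ(x))dμ(x)|² ≥ (ν(Ω_ℓ)/ν(Y_ℓ∖Ω_ℓ)) · |∫_X α dμ|². -/
open MeasureTheory Finset

-- dual orthogonality
lemma dual_orth {Y : Type*} [Fintype Y] [DecidableEq Y] [DecidableEq (Y → ℂ)]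
    (ν : Y → ℝ) (hνpos : ∀ y, 0 < ν y)
    (B : Finset (Y → ℂ)) (hcard : B.card = Fintype.card Y)
    (horth : ∀ φ ∈ B, ∀ ψ ∈ B,
      ∑ y, (ν y : ℂ) * φ y * (starRingEnd ℂ) (ψ y) = if φ = ψ then 1 else 0)
    (y y' : Y) :
    ∑ φ ∈ B, (starRingEnd ℂ) (φ y) * φ y' = if y = y' then ((ν y : ℂ))⁻¹ else 0 := by
  classical
  have hcard' : Fintype.card {φ // φ ∈ B} = Fintype.card Y := by
    simpa [Fintype.card_coe] using hcard
  let e : {φ // φ ∈ B} ≃ Y := Fintype.equivOfCardEq hcard'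
  let M : Matrix Y Y ℂ := fun i j => ((Real.sqrt (ν j) : ℝ) : ℂ) * (e.symm i : Y → ℂ) j
  have hsq : ∀ j, ((Real.sqrt (ν j) : ℝ) : ℂ) * ((Real.sqrt (ν j) : ℝ) : ℂ) = (ν j : ℂ) := by
    intro j
    rw [← Complex.ofReal_mul, Real.mul_self_sqrt (hνpos j).le]
  have hMM : M * M.conjTranspose = 1 := by
    ext i k
    have h1 : ∀ j, M i j * (starRingEnd ℂ) (M k j)
        = (ν j : ℂ) * (e.symm i : Y → ℂ) j * (starRingEnd ℂ) ((e.symm k : Y → ℂ) j) := by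
      intro j
      simp only [M, map_mul, Complex.conj_ofReal]
      rw [← hsq j]; ring
    have h2 : ∑ j, M i j * (starRingEnd ℂ) (M k j) = if i = k then 1 else 0 := by
      simp_rw [h1]
      rw [horth _ (e.symm i).2 _ (e.symm k).2]
      congr 1
      simp [Subtype.coe_injective.eq_iff, e.symm.injective.eq_iff]
    simp only [Matrix.mul_apply, Matrix.conjTranspose_apply, Matrix.one_apply]
    simpa using h2
  have hMM' : M.conjTranspose * M = 1 := mul_eq_one_comm.mp hMM
  have h := congrFun (congrFun hMM' y) y'
  have h3 : ∑ i, (starRingEnd ℂ) (M i y) * M i y' = if y = y' then 1 else 0 := by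
    simpa [Matrix.mul_apply, Matrix.conjTranspose_apply, Matrix.one_apply] using h
  have h4 : ∑ i, (starRingEnd ℂ) (M i y) * M i y'
      = ((Real.sqrt (ν y) : ℝ) : ℂ) * ((Real.sqrt (ν y') : ℝ) : ℂ)
        * ∑ φ ∈ B, (starRingEnd ℂ) (φ y) * φ y' := by
    rw [Finset.mul_sum,
      ← Finset.sum_coe_sort B (fun φ => ((Real.sqrt (ν y) : ℝ) : ℂ)
        * ((Real.sqrt (ν y') : ℝ) : ℂ) * ((starRingEnd ℂ) ((φ : Y → ℂ) y) * (φ : Y → ℂ) y')),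
      ← Equiv.sum_comp e.symm]
    apply Finset.sum_congr rfl
    intro i _
    simp only [M, map_mul, Complex.conj_ofReal]
    ring
  rw [h4] at h3
  by_cases hyy : y = y'
  · subst hyy
    simp only [if_pos rfl] at h3 ⊢
    rw [hsq] at h3
    exact eq_inv_of_mul_eq_one_right h3
  · simp only [if_neg hyy] at h3 ⊢
    have hs : ∀ j, ((Real.sqrt (ν j) : ℝ) : ℂ) ≠ 0 := by
      intro j
      simp only [ne_eq, Complex.ofReal_eq_zero]
      exact Real.sqrt_ne_zero'.mpr (hνpos j)
    exact (mul_eq_zero.mp h3).resolve_left (mul_ne_zero (hs y) (hs y'))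

/-- Single-prime lower bound lemma (`lm-2b`, case of one prime, of Kowalski,
"The principle of the large sieve"): if `α` is supported on the sifted set, then
`∑_{φ∈B*} |∫ α φ(ρ x)|² ≥ (ν(Ω)/ν(Y∖Ω)) |∫ α|²`. -/
theorem large_sieve_single_lower_bound
    {X : Type*} [MeasurableSpace X] (μ : Measure X) [IsFiniteMeasure μ]
    {Y : Type*} [Fintype Y] [DecidableEq Y] [DecidableEq (Y → ℂ)]
    (ν : Y → ℝ) (hνpos : ∀ y, 0 < ν y) (hνsum : ∑ y, ν y = 1)
    (ρ : X → Y) (hρ : ∀ y, MeasurableSet {x | ρ x = y})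
    (B : Finset (Y → ℂ)) (h1B : (1 : Y → ℂ) ∈ B)
    (hcard : B.card = Fintype.card Y)
    (horth : ∀ φ ∈ B, ∀ ψ ∈ B,
      ∑ y, (ν y : ℂ) * φ y * (starRingEnd ℂ) (ψ y) = if φ = ψ then 1 else 0)
    (Ω : Finset Y) (hΩ : Ω ≠ Finset.univ)
    (α : X → ℂ) (hα : MemLp α 2 μ)
    (hsupp : ∀ x, ρ x ∈ Ω → α x = 0) :
    ((∑ y ∈ Ω, ν y) / (∑ y ∈ Ωᶜ, ν y)) * ‖∫ x, α x ∂μ‖ ^ 2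
      ≤ ∑ φ ∈ B.erase 1, ‖∫ x, α x * φ (ρ x) ∂μ‖ ^ 2 := by
  classical
  set T : Y → ℂ := fun y => ∫ x, ({x | ρ x = y}.indicator α) x ∂μ with hTdef
  have hαint : Integrable α μ := hα.integrable one_le_two
  have hTint : ∀ y : Y, Integrable ({x | ρ x = y}.indicator α) μ :=
    fun y => hαint.indicator (hρ y)
  -- S φ = ∑ y, T y * φ y
  have hS : ∀ φ : Y → ℂ, ∫ x, α x * φ (ρ x) ∂μ = ∑ y, T y * φ y := by
    intro φ
    have hpt : ∀ x, α x * φ (ρ x) = ∑ y, ({x | ρ x = y}.indicator α) x * φ y := by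
      intro x
      rw [Finset.sum_eq_single (ρ x)]
      · simp [Set.indicator_of_mem, Set.mem_setOf_eq]
      · intro y _ hy
        have : x ∉ {x | ρ x = y} := fun h => hy h.symm
        simp [Set.indicator_of_notMem this]
      · simp
    calc ∫ x, α x * φ (ρ x) ∂μ
        = ∫ x, ∑ y, ({x | ρ x = y}.indicator α) x * φ y ∂μ := by simp_rw [hpt]
      _ = ∑ y, ∫ x, ({x | ρ x = y}.indicator α) x * φ y ∂μ :=
          integral_finset_sum _ (fun y _ => (hTint y).mul_const _)
      _ = ∑ y, T y * φ y := by
          apply Finset.sum_congr rfl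
          intro y _
          rw [integral_mul_const]
  -- T vanishes on Ω
  have hT0 : ∀ y ∈ Ω, T y = 0 := by
    intro y hy
    have hz : ({x | ρ x = y}.indicator α) = fun _ => (0 : ℂ) := by
      funext x
      by_cases h : ρ x = y
      · simp only [Set.indicator_of_mem, Set.mem_setOf_eq, h]
        exact hsupp x (h ▸ hy)
      · simp only [Set.indicator_apply, Set.mem_setOf_eq, if_neg h]
    simp [hTdef, hz]
  -- Parseval
  have hPar : ∑ φ ∈ B, (∑ y, T y * φ y) * (starRingEnd ℂ) (∑ y, T y * φ y)
      = ∑ y, T y * (starRingEnd ℂ) (T y) * ((ν y : ℂ))⁻¹ := by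
    have expand : ∀ φ : Y → ℂ, (∑ y, T y * φ y) * (starRingEnd ℂ) (∑ y, T y * φ y)
        = ∑ y, ∑ y', (T y * (starRingEnd ℂ) (T y')) * (φ y * (starRingEnd ℂ) (φ y')) := by
      intro φ
      rw [map_sum, Finset.sum_mul_sum]
      apply Finset.sum_congr rfl; intro y _
      apply Finset.sum_congr rfl; intro y' _
      simp only [map_mul]
      ring
    calc ∑ φ ∈ B, (∑ y, T y * φ y) * (starRingEnd ℂ) (∑ y, T y * φ y)
        = ∑ φ ∈ B, ∑ y, ∑ y', (T y * (starRingEnd ℂ) (T y')) * (φ y * (starRingEnd ℂ) (φ y')) := by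
          exact Finset.sum_congr rfl fun φ _ => expand φ
      _ = ∑ y, ∑ y', (T y * (starRingEnd ℂ) (T y'))
            * ∑ φ ∈ B, φ y * (starRingEnd ℂ) (φ y') := by
          rw [Finset.sum_comm]
          apply Finset.sum_congr rfl; intro y _
          rw [Finset.sum_comm]
          apply Finset.sum_congr rfl; intro y' _
          rw [Finset.mul_sum]
      _ = ∑ y, T y * (starRingEnd ℂ) (T y) * ((ν y : ℂ))⁻¹ := by
          apply Finset.sum_congr rfl; intro y _
          have hin : ∀ y' : Y, ∑ φ ∈ B, φ y * (starRingEnd ℂ) (φ y')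
              = if y' = y then ((ν y' : ℂ))⁻¹ else 0 := by
            intro y'
            have := dual_orth ν hνpos B hcard horth y' y
            calc ∑ φ ∈ B, φ y * (starRingEnd ℂ) (φ y')
                = ∑ φ ∈ B, (starRingEnd ℂ) (φ y') * φ y :=
                  Finset.sum_congr rfl fun φ _ => mul_comm _ _
              _ = _ := this
          simp_rw [hin, mul_ite, mul_zero]
          simp
  have hmul_conj : ∀ z : ℂ, z * (starRingEnd ℂ) z = ((‖z‖ : ℂ)) ^ 2 := by
    intro z
    rw [Complex.mul_conj, Complex.normSq_eq_norm_sq]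
    push_cast
    ring
  have hParR : ∑ φ ∈ B, ‖∑ y, T y * φ y‖ ^ 2 = ∑ y, ‖T y‖ ^ 2 / ν y := by
    have hc : ((∑ φ ∈ B, ‖∑ y, T y * φ y‖ ^ 2 : ℝ) : ℂ)
        = ((∑ y, ‖T y‖ ^ 2 / ν y : ℝ) : ℂ) := by
      push_cast
      simp_rw [← hmul_conj, div_eq_mul_inv]
      exact hPar
    exact_mod_cast hc
  have hgoal1 : ∫ x, α x ∂μ = ∑ y, T y := by simpa using hS 1
  have herase : ∑ φ ∈ B.erase 1, ‖∫ x, α x * φ (ρ x) ∂μ‖ ^ 2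
      = ∑ φ ∈ B, ‖∑ y, T y * φ y‖ ^ 2 - ‖∑ y, T y‖ ^ 2 := by
    rw [Finset.sum_erase_eq_sub h1B]
    congr 1
    · exact Finset.sum_congr rfl fun φ _ => by rw [hS φ]
    · congr 1
      rw [show (∫ x, α x * (1 : Y → ℂ) (ρ x) ∂μ) = ∑ y, T y by simpa using hS 1]
  rw [hgoal1, herase, hParR]
  set a := ∑ y ∈ Ω, ν y with hadef
  set b := ∑ y ∈ Ωᶜ, ν y with hbdef
  have hb : 0 < b := Finset.sum_pos (fun y _ => hνpos y) (by
    rw [← Finset.compl_ne_univ_iff_nonempty, compl_compl]; exact hΩ)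
  have hab : a + b = 1 := by rw [hadef, hbdef, Finset.sum_add_sum_compl, hνsum]
  have hQ : ∑ y, ‖T y‖ ^ 2 / ν y = ∑ y ∈ Ωᶜ, ‖T y‖ ^ 2 / ν y := by
    rw [← Finset.sum_add_sum_compl Ω (fun y => ‖T y‖ ^ 2 / ν y),
      Finset.sum_eq_zero (fun y hy => by rw [hT0 y hy]; simp), zero_add]
  have hN : ‖∑ y, T y‖ ≤ ∑ y ∈ Ωᶜ, ‖T y‖ := by
    rw [← Finset.sum_add_sum_compl Ω T, Finset.sum_eq_zero hT0, zero_add]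
    exact norm_sum_le _ _
  have hCS : (∑ y ∈ Ωᶜ, ‖T y‖) ^ 2 / b ≤ ∑ y ∈ Ωᶜ, ‖T y‖ ^ 2 / ν y :=
    Finset.sq_sum_div_le_sum_sq_div _ _ (fun y _ => hνpos y)
  have hkey : ‖∑ y, T y‖ ^ 2 ≤ b * ∑ y, ‖T y‖ ^ 2 / ν y := by
    rw [hQ]
    have h1 : ‖∑ y, T y‖ ^ 2 ≤ (∑ y ∈ Ωᶜ, ‖T y‖) ^ 2 :=
      pow_le_pow_left₀ (norm_nonneg _) hN 2
    rw [div_le_iff₀ hb] at hCS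
    calc ‖∑ y, T y‖ ^ 2 ≤ (∑ y ∈ Ωᶜ, ‖T y‖) ^ 2 := h1
      _ ≤ (∑ y ∈ Ωᶜ, ‖T y‖ ^ 2 / ν y) * b := hCS
      _ = b * ∑ y ∈ Ωᶜ, ‖T y‖ ^ 2 / ν y := mul_comm _ _
  rw [div_mul_eq_mul_div, div_le_iff₀ hb]
  nlinarith [hkey, hb, sq_nonneg ‖∑ y, T y‖]
end

section
/- Abstract large sieve inequality: let (X,μ) be a finite measure space, Λ a finite index set, and for each ℓ∈Λ a map ρ_ℓ: X → Y_ℓ to a finite set with probability density ν_ℓ > 0. Let L be a collection of subsets of Λ containing all singletons of a set L* and closed under the condition that elements of members of L are in L*. Define the large sieve constant Δ as the least constant such that ∑_{m∈L} ∑_{φ∈B_m*} |∫_X α(x)φ(ρ_m(x))dμ(x)|² ≤ Δ ∫_X |α|² dμ for all α ∈ L²(X,μ), where B_m* is the product of the bases B_ℓ* for ℓ∈m. Then for any sieving sets Ω_ℓ ⊊ Y_ℓ (ℓ∈L*), the sifted set S = {x ∈ X : ρ_ℓ(x) ∉ Ω_ℓ for all ℓ∈L*} satisfies μ(S) ≤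 Δ·H⁻¹ where H = ∑_{m∈L} ∏_{ℓ∈m} ν(Ω_ℓ)/(1−ν(Ω_ℓ)). -/
open MeasureTheory Finset


lemma als_dual_orth {Z : Type*} [Fintype Z] [DecidableEq Z] [DecidableEq (Z → ℂ)]
    (ν : Z → ℝ) (hpos : ∀ y, 0 < ν y)
    (B : Finset (Z → ℂ)) (hcard : B.card = Fintype.card Z)
    (horth : ∀ φ ∈ B, ∀ ψ ∈ B,
      ∑ y, (ν y : ℂ) * φ y * (starRingEnd ℂ) (ψ y) = if φ = ψ then 1 else 0)
    (y y' : Z) :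
    ∑ φ ∈ B, (starRingEnd ℂ) (φ y) * φ y' = if y = y' then ((ν y : ℂ))⁻¹ else 0 := by
  classical
  set M : Matrix {φ // φ ∈ B} Z ℂ := fun φ y => (Real.sqrt (ν y) : ℂ) * φ.1 y with hM
  have hsq : ∀ z, ((Real.sqrt (ν z) : ℂ)) * ((Real.sqrt (ν z) : ℂ)) = (ν z : ℂ) := by
    intro z
    rw [← Complex.ofReal_mul, Real.mul_self_sqrt (hpos z).le]
  have h1 : M * M.conjTranspose = 1 := by
    ext φ ψ
    simp only [Matrix.mul_apply, Matrix.conjTranspose_apply, Matrix.one_apply]; simp only [hM]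
    have key : ∀ z, (Real.sqrt (ν z) : ℂ) * φ.1 z * star ((Real.sqrt (ν z) : ℂ) * ψ.1 z)
        = (ν z : ℂ) * φ.1 z * (starRingEnd ℂ) (ψ.1 z) := by
      intro z
      simp only [star_mul', RCLike.star_def, Complex.conj_ofReal]
      rw [← hsq z]; ring
    rw [Finset.sum_congr rfl fun z _ => key z, horth φ.1 φ.2 ψ.1 ψ.2]
    congr 1; exact propext Subtype.ext_iff.symm
  have e : {φ // φ ∈ B} ≃ Z := Fintype.equivOfCardEq (by rw [Fintype.card_coe, hcard])
  have h2 : M.conjTranspose * M = 1 := (Matrix.mul_eq_one_comm_of_equiv e).mp h1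
  have h3 := congrFun (congrFun h2 y) y'
  simp only [Matrix.mul_apply, Matrix.conjTranspose_apply, Matrix.one_apply] at h3; simp only [hM] at h3
  have h4 : (Real.sqrt (ν y) : ℂ) * (Real.sqrt (ν y') : ℂ) *
      ∑ φ ∈ B, (starRingEnd ℂ) (φ y) * φ y' = if y = y' then 1 else 0 := by
    rw [Finset.mul_sum, ← h3,
      ← Finset.sum_coe_sort B (fun φ => (Real.sqrt (ν y) : ℂ) * (Real.sqrt (ν y') : ℂ) *
        ((starRingEnd ℂ) (φ y) * φ y'))]
    refine Finset.sum_congr rfl fun φ _ => ?_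
    simp only [star_mul', RCLike.star_def, Complex.conj_ofReal]
    ring
  have hsy : ∀ z, (Real.sqrt (ν z) : ℂ) ≠ 0 := fun z =>
    Complex.ofReal_ne_zero.mpr (Real.sqrt_ne_zero'.mpr (hpos z))
  by_cases hyy : y = y'
  · subst hyy
    have h5 : (ν y : ℂ) * ∑ φ ∈ B, (starRingEnd ℂ) (φ y) * φ y = 1 := by
      rw [← hsq y]; simpa using h4
    simp only [if_pos rfl]
    exact (inv_eq_of_mul_eq_one_right h5).symm
  · simp only [if_neg hyy] at h4 ⊢
    rcases mul_eq_zero.mp h4 with h | h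
    · exact absurd h (mul_ne_zero (hsy y) (hsy y'))
    · exact h

lemma als_coeffs {Z : Type*} [Fintype Z] [DecidableEq Z] [DecidableEq (Z → ℂ)]
    (ν : Z → ℝ) (hpos : ∀ y, 0 < ν y) (hsum : ∑ y, ν y = 1)
    (B : Finset (Z → ℂ)) (h1B : (1 : Z → ℂ) ∈ B) (hcard : B.card = Fintype.card Z)
    (horth : ∀ φ ∈ B, ∀ ψ ∈ B,
      ∑ y, (ν y : ℂ) * φ y * (starRingEnd ℂ) (ψ y) = if φ = ψ then 1 else 0)
    (Ω : Finset Z) (hΩ : Ω ≠ Finset.univ) :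
    ∃ c : (Z → ℂ) → ℂ,
      (∑ φ ∈ B.erase 1, ‖c φ‖ ^ 2)
        = (∑ y ∈ Ω, ν y) / (1 - ∑ y ∈ Ω, ν y) ∧
      ∀ y, (∑ φ ∈ B.erase 1, c φ * φ y)
        = if y ∈ Ω then -1 else (((∑ y ∈ Ω, ν y) / (1 - ∑ y ∈ Ω, ν y) : ℝ) : ℂ) := by
  classical
  set P : ℝ := ∑ y ∈ Ω, ν y with hP
  have hP0 : 0 ≤ P := Finset.sum_nonneg fun y _ => (hpos y).le
  have hP1 : P < 1 := by
    rw [← hsum]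
    obtain ⟨y0, hy0⟩ : ∃ y0, y0 ∉ Ω := by
      by_contra h
      push_neg at h
      exact hΩ (Finset.eq_univ_iff_forall.mpr h)
    exact Finset.sum_lt_sum_of_subset (Finset.subset_univ Ω) (Finset.mem_univ y0) hy0
      (hpos y0) (fun y _ _ => (hpos y).le)
  have h1P : (0:ℝ) < 1 - P := by linarith
  set g : Z → ℂ := fun y => if y ∈ Ω then -1 else ((P / (1 - P) : ℝ) : ℂ) with hg
  set c : (Z → ℂ) → ℂ := fun φ => ∑ y, (ν y : ℂ) * g y * (starRingEnd ℂ) (φ y) with hc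
  -- complement sum
  have hcompl : ∑ y ∈ Ωᶜ, ν y = 1 - P := by
    have := Finset.sum_add_sum_compl Ω ν
    rw [hsum] at this; linarith
  -- c 1 = 0
  have hc1 : c (1 : Z → ℂ) = 0 := by
    have : c (1 : Z → ℂ) = ∑ y, (ν y : ℂ) * g y := by
      simp [hc]
    rw [this, ← Finset.sum_add_sum_compl Ω fun y => (ν y : ℂ) * g y]
    have hA : ∑ y ∈ Ω, (ν y : ℂ) * g y = -(P : ℂ) := by
      rw [show -(P:ℂ) = ∑ y ∈ Ω, -(ν y : ℂ) by
        push_cast [hP]; rw [← Finset.sum_neg_distrib]]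
      exact Finset.sum_congr rfl fun y hy => by simp [hg, hy]
    have hB : ∑ y ∈ Ωᶜ, (ν y : ℂ) * g y = ((1 - P) * (P / (1 - P)) : ℝ) := by
      rw [show (((1 - P) * (P / (1 - P)) : ℝ) : ℂ) = ∑ y ∈ Ωᶜ, (ν y : ℂ) * ((P / (1 - P) : ℝ) : ℂ) by
        rw [← Finset.sum_mul]; push_cast [← hcompl]; ring]
      refine Finset.sum_congr rfl fun y hy => ?_
      rw [Finset.mem_compl] at hy
      simp [hg, hy]
    rw [hA, hB]
    rw [mul_div_cancel₀ _ (ne_of_gt h1P)]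
    push_cast
    ring
  -- expansion over full B
  have hexp : ∀ y', (∑ φ ∈ B, c φ * φ y') = g y' := by
    intro y'
    calc ∑ φ ∈ B, c φ * φ y'
        = ∑ φ ∈ B, ∑ y, (ν y : ℂ) * g y * ((starRingEnd ℂ) (φ y) * φ y') := by
          refine Finset.sum_congr rfl fun φ _ => ?_
          rw [hc, Finset.sum_mul]
          exact Finset.sum_congr rfl fun y _ => by ring
      _ = ∑ y, (ν y : ℂ) * g y * ∑ φ ∈ B, (starRingEnd ℂ) (φ y) * φ y' := by
          rw [Finset.sum_comm]
          exact Finset.sum_congr rfl fun y _ => by rw [Finset.mul_sum]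
      _ = ∑ y, (ν y : ℂ) * g y * (if y = y' then ((ν y : ℂ))⁻¹ else 0) := by
          exact Finset.sum_congr rfl fun y _ => by
            rw [als_dual_orth ν hpos B hcard horth y y']
      _ = g y' := by
          rw [Finset.sum_eq_single y']
          · have hν : (ν y' : ℂ) ≠ 0 := by
              simpa using (hpos y').ne'
            rw [if_pos rfl]
            field_simp
          · intro y _ hy; simp [hy]
          · intro h; exact absurd (Finset.mem_univ y') h
  -- Parseval over full B
  have hC : (∑ φ ∈ B, (Complex.normSq (c φ) : ℂ)) = ((P / (1 - P) : ℝ) : ℂ) := by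
    have step1 : ∀ φ : Z → ℂ, (Complex.normSq (c φ) : ℂ)
        = ∑ y, ∑ y', ((ν y : ℂ) * g y * (starRingEnd ℂ) (φ y)) *
            ((ν y' : ℂ) * (starRingEnd ℂ) (g y') * φ y') := by
      intro φ
      rw [← Complex.mul_conj, hc, map_sum, Finset.sum_mul_sum]
      refine Finset.sum_congr rfl fun y _ => Finset.sum_congr rfl fun y' _ => ?_
      simp only [map_mul, Complex.conj_ofReal, Complex.conj_conj]
    calc ∑ φ ∈ B, (Complex.normSq (c φ) : ℂ)
        = ∑ y, ∑ y', ((ν y : ℂ) * g y * (ν y' : ℂ) * (starRingEnd ℂ) (g y')) *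
            ∑ φ ∈ B, (starRingEnd ℂ) (φ y) * φ y' := by
          rw [Finset.sum_congr rfl fun φ _ => step1 φ, Finset.sum_comm]
          refine Finset.sum_congr rfl fun y _ => ?_
          rw [Finset.sum_comm]
          refine Finset.sum_congr rfl fun y' _ => ?_
          rw [Finset.mul_sum]
          exact Finset.sum_congr rfl fun φ _ => by ring
      _ = ∑ y, (ν y : ℂ) * Complex.normSq (g y) := by
          refine Finset.sum_congr rfl fun y _ => ?_
          rw [Finset.sum_eq_single y]
          · rw [als_dual_orth ν hpos B hcard horth y y, if_pos rfl, ← Complex.mul_conj]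
            have hν : (ν y : ℂ) ≠ 0 := by simpa using (hpos y).ne'
            field_simp
          · intro y' _ hy'
            rw [als_dual_orth ν hpos B hcard horth y y',
              if_neg (fun h => hy' h.symm), mul_zero]
          · intro h; exact absurd (Finset.mem_univ y) h
      _ = ((P / (1 - P) : ℝ) : ℂ) := by
          rw [← Finset.sum_add_sum_compl Ω fun y => (ν y : ℂ) * Complex.normSq (g y)]
          have hA : ∑ y ∈ Ω, (ν y : ℂ) * Complex.normSq (g y) = (P : ℂ) := by
            rw [show (P:ℂ) = ∑ y ∈ Ω, (ν y : ℂ) by push_cast [hP]; ring]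
            exact Finset.sum_congr rfl fun y hy => by simp [hg, hy]
          have hB : ∑ y ∈ Ωᶜ, (ν y : ℂ) * Complex.normSq (g y)
              = (((1 - P) * (P / (1 - P)) ^ 2 : ℝ) : ℂ) := by
            rw [show (((1 - P) * (P / (1 - P)) ^ 2 : ℝ) : ℂ)
                = ∑ y ∈ Ωᶜ, (ν y : ℂ) * (((P / (1 - P)) ^ 2 : ℝ) : ℂ) by
              rw [← Finset.sum_mul]; push_cast [← hcompl]; ring]
            refine Finset.sum_congr rfl fun y hy => ?_
            rw [Finset.mem_compl] at hy
            have hgy : g y = ((P / (1 - P) : ℝ) : ℂ) := by simp [hg, hy]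
            rw [hgy, Complex.normSq_ofReal]
            push_cast
            ring
          rw [hA, hB]
          have h1Pc : ((1 - P : ℝ) : ℂ) ≠ 0 := by exact_mod_cast h1P.ne'
          push_cast at h1Pc ⊢
          field_simp [h1Pc]
          ring
  have hpars : (∑ φ ∈ B, ‖c φ‖ ^ 2) = P / (1 - P) := by
    have hC' : (∑ φ ∈ B, ((‖c φ‖ : ℂ)) ^ 2) = ((P / (1 - P) : ℝ) : ℂ) := by
      rw [← hC]
      refine Finset.sum_congr rfl fun φ _ => ?_
      rw [Complex.normSq_eq_norm_sq]
      push_cast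
      ring
    exact_mod_cast hC'
  refine ⟨c, ?_, ?_⟩
  · rw [Finset.sum_erase_eq_sub h1B, hpars, hc1]
    simp [hP]
  · intro y
    rw [Finset.sum_erase_eq_sub h1B, hexp y, hc1]
    simp [hg, hP]


lemma als_sum_piFinset_prod {ι : Type*} [Fintype ι] [DecidableEq ι]
    {β : ι → Type*} [∀ i, DecidableEq (β i)]
    (m : Finset ι) (t : ∀ i, Finset (β i)) (d : ∀ i, β i)
    {R : Type*} [CommSemiring R] (f : ∀ i, β i → R) :
    ∑ b ∈ Fintype.piFinset (fun i => if i ∈ m then t i else {d i}),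
        ∏ i ∈ m, f i (b i)
      = ∏ i ∈ m, ∑ φ ∈ t i, f i φ := by
  classical
  set F : ∀ i, β i → R := fun i φ => if i ∈ m then f i φ else 1 with hF
  have h1 : ∀ b : ∀ i, β i, ∏ i ∈ m, f i (b i) = ∏ i, F i (b i) := by
    intro b
    rw [← Finset.prod_subset (Finset.subset_univ m) (fun i _ hi => by simp [hF, hi])]
    exact Finset.prod_congr rfl fun i hi => by simp [hF, hi]
  rw [Finset.sum_congr rfl fun b _ => h1 b, ← Finset.prod_univ_sum]
  rw [← Finset.prod_subset (Finset.subset_univ m) (fun i _ hi => by simp [hF, hi])]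
  exact Finset.prod_congr rfl fun i hi => by simp [hF, hi]

lemma als_meas_comp {X : Type*} [MeasurableSpace X] {Z : Type*} [Fintype Z] [DecidableEq Z]
    (ρ : X → Z) (hρ : ∀ y, MeasurableSet {x | ρ x = y}) (φ : Z → ℂ) :
    Measurable fun x => φ (ρ x) := by
  have h : (fun x => φ (ρ x)) = fun x => ∑ y : Z, if ρ x = y then φ y else 0 := by
    funext x
    rw [Finset.sum_eq_single (ρ x)]
    · simp
    · intro y _ hy
      exact if_neg (fun h => hy h.symm)
    · intro h; exact absurd (Finset.mem_univ _) h
  rw [h]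
  exact Finset.measurable_sum _ fun y _ =>
    Measurable.ite (hρ y) measurable_const measurable_const

lemma als_cauchy_schwarz {β : Type*} (s : Finset β) (f g : β → ℂ) :
    ‖∑ b ∈ s, f b * g b‖ ^ 2 ≤ (∑ b ∈ s, ‖f b‖ ^ 2) * (∑ b ∈ s, ‖g b‖ ^ 2) := by
  calc ‖∑ b ∈ s, f b * g b‖ ^ 2
      ≤ (∑ b ∈ s, ‖f b‖ * ‖g b‖) ^ 2 := by
        have h1 : ‖∑ b ∈ s, f b * g b‖ ≤ ∑ b ∈ s, ‖f b‖ * ‖g b‖ :=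
          (norm_sum_le s _).trans (le_of_eq (Finset.sum_congr rfl fun b _ => norm_mul _ _))
        exact pow_le_pow_left₀ (norm_nonneg _) h1 2
    _ ≤ _ := Finset.sum_mul_sq_le_sq_mul_sq s _ _


lemma als_P_lt_one {Z : Type*} [Fintype Z] (ν : Z → ℝ) (hpos : ∀ y, 0 < ν y)
    (hsum : ∑ y, ν y = 1) (Ω : Finset Z) (hΩ : Ω ≠ Finset.univ) :
    ∑ y ∈ Ω, ν y < 1 := by
  rw [← hsum]
  obtain ⟨y0, hy0⟩ : ∃ y0, y0 ∉ Ω := by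
    by_contra h
    push_neg at h
    exact hΩ (Finset.eq_univ_iff_forall.mpr h)
  exact Finset.sum_lt_sum_of_subset (Finset.subset_univ Ω) (Finset.mem_univ y0) hy0
    (hpos y0) (fun y _ _ => (hpos y).le)

/-- Abstract large sieve inequality (Proposition 2.2 / `pr-comb-sieve` of Kowalski,
"The principle of the large sieve").  The conclusion `μ(S)·H ≤ Δ` is the
(division-free form of) `μ(S) ≤ Δ·H⁻¹`. -/
theorem abstract_large_sieve
    {X : Type*} [MeasurableSpace X] (μ : Measure X) [IsFiniteMeasure μ]
    {ι : Type*} [Fintype ι] [DecidableEq ι]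
    (Y : ι → Type*) [∀ ℓ, Fintype (Y ℓ)] [∀ ℓ, DecidableEq (Y ℓ)]
    [∀ ℓ, DecidableEq (Y ℓ → ℂ)]
    (ν : ∀ ℓ, Y ℓ → ℝ) (hνpos : ∀ ℓ y, 0 < ν ℓ y) (hνsum : ∀ ℓ, ∑ y, ν ℓ y = 1)
    (ρ : ∀ ℓ, X → Y ℓ) (hρ : ∀ ℓ y, MeasurableSet {x | ρ ℓ x = y})
    -- orthonormal bases of `L²(Y ℓ, ν ℓ)` containing the constant function 1
    (B : ∀ ℓ, Finset (Y ℓ → ℂ)) (h1B : ∀ ℓ, (1 : Y ℓ → ℂ) ∈ B ℓ)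
    (hcard : ∀ ℓ, (B ℓ).card = Fintype.card (Y ℓ))
    (horth : ∀ ℓ, ∀ φ ∈ B ℓ, ∀ ψ ∈ B ℓ,
      ∑ y, (ν ℓ y : ℂ) * φ y * (starRingEnd ℂ) (ψ y) = if φ = ψ then 1 else 0)
    -- sieve support
    (Lstar : Finset ι) (L : Finset (Finset ι))
    (hL1 : ∀ ℓ ∈ Lstar, {ℓ} ∈ L)
    (hL2 : ∀ m ∈ L, ∀ ℓ ∈ m, ℓ ∈ Lstar)
    -- the large sieve constant
    (Δ : ℝ) (hΔ0 : 0 ≤ Δ)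
    (hΔ : ∀ α : X → ℂ, MemLp α 2 μ →
      ∑ m ∈ L, ∑ b ∈ Fintype.piFinset
          (fun ℓ => if ℓ ∈ m then (B ℓ).erase 1 else {(1 : Y ℓ → ℂ)}),
        ‖∫ x, α x * ∏ ℓ ∈ m, b ℓ (ρ ℓ x) ∂μ‖ ^ 2
        ≤ Δ * ∫ x, ‖α x‖ ^ 2 ∂μ)
    -- sieving sets
    (Ω : ∀ ℓ, Finset (Y ℓ)) (hΩ : ∀ ℓ ∈ Lstar, Ω ℓ ≠ Finset.univ) :
    (μ {x | ∀ ℓ ∈ Lstar, ρ ℓ x ∉ Ω ℓ}).toReal *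
        (∑ m ∈ L, ∏ ℓ ∈ m,
          (∑ y ∈ Ω ℓ, ν ℓ y) / (1 - ∑ y ∈ Ω ℓ, ν ℓ y))
      ≤ Δ := by
  classical
  set S : Set X := {x | ∀ ℓ ∈ Lstar, ρ ℓ x ∉ Ω ℓ} with hS
  have hSm : MeasurableSet S := by
    have hrw : S = ⋂ ℓ ∈ (Lstar : Set ι), ⋂ y ∈ (Ω ℓ : Set (Y ℓ)), {x | ρ ℓ x = y}ᶜ := by
      ext x
      simp only [hS, Set.mem_setOf_eq, Set.mem_iInter, Set.mem_compl_iff, Finset.mem_coe]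
      constructor
      · intro h ℓ hℓ y hy hxy
        exact h ℓ hℓ (hxy ▸ hy)
      · intro h ℓ hℓ hmem
        exact h ℓ hℓ _ hmem rfl
    rw [hrw]
    exact MeasurableSet.biInter (Set.to_countable _) fun ℓ _ =>
      MeasurableSet.biInter (Set.to_countable _) fun y _ => (hρ ℓ y).compl
  set α : X → ℂ := S.indicator (fun _ => (1 : ℂ)) with hα
  have hα2 : MemLp α 2 μ := memLp_indicator_const 2 hSm 1 (Or.inr (measure_ne_top μ S))
  have hαint : ∫ x, ‖α x‖ ^ 2 ∂μ = (μ S).toReal := by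
    have hfun : (fun x => ‖α x‖ ^ 2) = S.indicator (fun _ => (1 : ℝ)) := by
      funext x
      by_cases hx : x ∈ S <;> simp [hα, hx]
    rw [hfun, integral_indicator_const (1 : ℝ) hSm, smul_eq_mul, mul_one, measureReal_def]
  -- choose coefficients
  have hex : ∀ ℓ, ℓ ∈ Lstar → ∃ c : (Y ℓ → ℂ) → ℂ,
      (∑ φ ∈ (B ℓ).erase 1, ‖c φ‖ ^ 2)
        = (∑ y ∈ Ω ℓ, ν ℓ y) / (1 - ∑ y ∈ Ω ℓ, ν ℓ y) ∧
      ∀ y, (∑ φ ∈ (B ℓ).erase 1, c φ * φ y)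
        = if y ∈ Ω ℓ then -1
          else (((∑ y ∈ Ω ℓ, ν ℓ y) / (1 - ∑ y ∈ Ω ℓ, ν ℓ y) : ℝ) : ℂ) :=
    fun ℓ hℓ => als_coeffs (ν ℓ) (hνpos ℓ) (hνsum ℓ) (B ℓ) (h1B ℓ) (hcard ℓ) (horth ℓ)
      (Ω ℓ) (hΩ ℓ hℓ)
  choose! c hcP hcE using hex
  -- the key estimate for each m ∈ L
  have key : ∀ m ∈ L,
      (μ S).toReal ^ 2 * ∏ ℓ ∈ m, ((∑ y ∈ Ω ℓ, ν ℓ y) / (1 - ∑ y ∈ Ω ℓ, ν ℓ y))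
        ≤ ∑ b ∈ Fintype.piFinset
            (fun ℓ => if ℓ ∈ m then (B ℓ).erase 1 else {(1 : Y ℓ → ℂ)}),
          ‖∫ x, α x * ∏ ℓ ∈ m, b ℓ (ρ ℓ x) ∂μ‖ ^ 2 := by
    intro m hm
    set Q : ℝ := ∏ ℓ ∈ m, ((∑ y ∈ Ω ℓ, ν ℓ y) / (1 - ∑ y ∈ Ω ℓ, ν ℓ y)) with hQ
    have hfrac : ∀ ℓ ∈ m, 0 ≤ (∑ y ∈ Ω ℓ, ν ℓ y) / (1 - ∑ y ∈ Ω ℓ, ν ℓ y) := by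
      intro ℓ hℓ
      have h1 : ∑ y ∈ Ω ℓ, ν ℓ y < 1 :=
        als_P_lt_one (ν ℓ) (hνpos ℓ) (hνsum ℓ) (Ω ℓ) (hΩ ℓ (hL2 m hm ℓ hℓ))
      exact div_nonneg (Finset.sum_nonneg fun y _ => (hνpos ℓ y).le) (by linarith)
    have hQ0 : 0 ≤ Q := Finset.prod_nonneg hfrac
    -- integrability
    have hbint : ∀ b : ∀ ℓ, Y ℓ → ℂ,
        Integrable (fun x => α x * ∏ ℓ ∈ m, b ℓ (ρ ℓ x)) μ := by
      intro b
      have hmeas : Measurable fun x => α x * ∏ ℓ ∈ m, b ℓ (ρ ℓ x) :=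
        (measurable_const.indicator hSm).mul
          (Finset.measurable_prod m fun ℓ _ => als_meas_comp (ρ ℓ) (hρ ℓ) (b ℓ))
      refine (integrable_const (∏ ℓ ∈ m, ∑ y, ‖b ℓ y‖)).mono' hmeas.aestronglyMeasurable
        (Filter.Eventually.of_forall fun x => ?_)
      calc ‖α x * ∏ ℓ ∈ m, b ℓ (ρ ℓ x)‖
          = ‖α x‖ * ∏ ℓ ∈ m, ‖b ℓ (ρ ℓ x)‖ := by rw [norm_mul, norm_prod]
        _ ≤ 1 * ∏ ℓ ∈ m, ∑ y, ‖b ℓ y‖ := by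
            refine mul_le_mul ?_ ?_ (Finset.prod_nonneg fun _ _ => norm_nonneg _) zero_le_one
            · by_cases hx : x ∈ S <;> simp [hα, hx]
            · exact Finset.prod_le_prod (fun _ _ => norm_nonneg _)
                (fun ℓ _ => Finset.single_le_sum (fun y _ => norm_nonneg _) (Finset.mem_univ _))
        _ = ∏ ℓ ∈ m, ∑ y, ‖b ℓ y‖ := one_mul _
    -- Step A : the exact identity
    have stepA : ((((μ S).toReal * Q : ℝ)) : ℂ)
        = ∑ b ∈ Fintype.piFinset
            (fun ℓ => if ℓ ∈ m then (B ℓ).erase 1 else {(1 : Y ℓ → ℂ)}),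
          (∏ ℓ ∈ m, c ℓ (b ℓ)) * ∫ x, α x * ∏ ℓ ∈ m, b ℓ (ρ ℓ x) ∂μ := by
      have hpt : ∀ x, S.indicator (fun _ => ((Q : ℝ) : ℂ)) x
          = ∑ b ∈ Fintype.piFinset
              (fun ℓ => if ℓ ∈ m then (B ℓ).erase 1 else {(1 : Y ℓ → ℂ)}),
            (∏ ℓ ∈ m, c ℓ (b ℓ)) * (α x * ∏ ℓ ∈ m, b ℓ (ρ ℓ x)) := by
        intro x
        have h2 : ∑ b ∈ Fintype.piFinset
              (fun ℓ => if ℓ ∈ m then (B ℓ).erase 1 else {(1 : Y ℓ → ℂ)}),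
              (∏ ℓ ∈ m, c ℓ (b ℓ)) * (α x * ∏ ℓ ∈ m, b ℓ (ρ ℓ x))
            = α x * ∏ ℓ ∈ m, (∑ φ ∈ (B ℓ).erase 1, c ℓ φ * φ (ρ ℓ x)) := by
          rw [← als_sum_piFinset_prod m (fun ℓ => (B ℓ).erase 1)
            (fun ℓ => (1 : Y ℓ → ℂ)) (fun ℓ φ => c ℓ φ * φ (ρ ℓ x)), Finset.mul_sum]
          refine Finset.sum_congr rfl fun b _ => ?_
          rw [Finset.prod_mul_distrib]
          ring
        rw [h2]
        by_cases hx : x ∈ S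
        · have hα1 : α x = 1 := by simp [hα, hx]
          rw [Set.indicator_of_mem hx, hα1, one_mul]
          rw [show ((Q : ℝ) : ℂ)
              = ∏ ℓ ∈ m, (((∑ y ∈ Ω ℓ, ν ℓ y) / (1 - ∑ y ∈ Ω ℓ, ν ℓ y) : ℝ) : ℂ) by
            rw [hQ]; push_cast; rfl]
          refine (Finset.prod_congr rfl fun ℓ hℓ => ?_).symm
          have hℓ' : ℓ ∈ Lstar := hL2 m hm ℓ hℓ
          have hρx : ρ ℓ x ∉ Ω ℓ := hx ℓ hℓ'
          rw [hcE ℓ hℓ' (ρ ℓ x), if_neg hρx]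
        · have hα0 : α x = 0 := by simp [hα, hx]
          rw [Set.indicator_of_notMem hx, hα0, zero_mul]
      calc ((((μ S).toReal * Q : ℝ)) : ℂ)
          = ∫ x, S.indicator (fun _ => ((Q : ℝ) : ℂ)) x ∂μ := by
            rw [integral_indicator_const _ hSm, Complex.real_smul, measureReal_def]
            push_cast
            ring
        _ = ∫ x, ∑ b ∈ Fintype.piFinset
              (fun ℓ => if ℓ ∈ m then (B ℓ).erase 1 else {(1 : Y ℓ → ℂ)}),
            (∏ ℓ ∈ m, c ℓ (b ℓ)) * (α x * ∏ ℓ ∈ m, b ℓ (ρ ℓ x)) ∂μ := by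
            exact integral_congr_ae (Filter.Eventually.of_forall hpt)
        _ = ∑ b ∈ Fintype.piFinset
              (fun ℓ => if ℓ ∈ m then (B ℓ).erase 1 else {(1 : Y ℓ → ℂ)}),
            (∏ ℓ ∈ m, c ℓ (b ℓ)) * ∫ x, α x * ∏ ℓ ∈ m, b ℓ (ρ ℓ x) ∂μ := by
            rw [integral_finset_sum _ fun b _ => (hbint b).const_mul _]
            refine Finset.sum_congr rfl fun b _ => ?_
            simpa [smul_eq_mul] using
              integral_smul (∏ ℓ ∈ m, c ℓ (b ℓ)) (fun x => α x * ∏ ℓ ∈ m, b ℓ (ρ ℓ x))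
    -- Step B : sum of squared coefficients
    have stepB : (∑ b ∈ Fintype.piFinset
          (fun ℓ => if ℓ ∈ m then (B ℓ).erase 1 else {(1 : Y ℓ → ℂ)}),
        ‖∏ ℓ ∈ m, c ℓ (b ℓ)‖ ^ 2) = Q := by
      calc (∑ b ∈ Fintype.piFinset
              (fun ℓ => if ℓ ∈ m then (B ℓ).erase 1 else {(1 : Y ℓ → ℂ)}),
            ‖∏ ℓ ∈ m, c ℓ (b ℓ)‖ ^ 2)
          = ∑ b ∈ Fintype.piFinset
              (fun ℓ => if ℓ ∈ m then (B ℓ).erase 1 else {(1 : Y ℓ → ℂ)}),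
            ∏ ℓ ∈ m, ‖c ℓ (b ℓ)‖ ^ 2 := by
            refine Finset.sum_congr rfl fun b _ => ?_
            rw [norm_prod, ← Finset.prod_pow]
        _ = ∏ ℓ ∈ m, ∑ φ ∈ (B ℓ).erase 1, ‖c ℓ φ‖ ^ 2 :=
            als_sum_piFinset_prod m (fun ℓ => (B ℓ).erase 1)
              (fun ℓ => (1 : Y ℓ → ℂ)) (fun ℓ φ => ‖c ℓ φ‖ ^ 2)
        _ = Q := by
            rw [hQ]
            exact Finset.prod_congr rfl fun ℓ hℓ => hcP ℓ (hL2 m hm ℓ hℓ)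
    -- Cauchy-Schwarz
    have hcs := als_cauchy_schwarz
      (Fintype.piFinset (fun ℓ => if ℓ ∈ m then (B ℓ).erase 1 else {(1 : Y ℓ → ℂ)}))
      (fun b => ∏ ℓ ∈ m, c ℓ (b ℓ))
      (fun b => ∫ x, α x * ∏ ℓ ∈ m, b ℓ (ρ ℓ x) ∂μ)
    rw [← stepA, stepB] at hcs
    have hnorm : ‖((((μ S).toReal * Q : ℝ)) : ℂ)‖ ^ 2 = ((μ S).toReal * Q) ^ 2 := by
      rw [Complex.norm_real, Real.norm_eq_abs, sq_abs]
    rw [hnorm] at hcs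
    rcases eq_or_lt_of_le hQ0 with hQz | hQpos
    · rw [← hQz, mul_zero]
      exact Finset.sum_nonneg fun b _ => sq_nonneg _
    · nlinarith [hcs, hQpos, ENNReal.toReal_nonneg (a := μ S)]
  -- sum over m and conclude
  have hsum2 : (μ S).toReal ^ 2 *
      (∑ m ∈ L, ∏ ℓ ∈ m, (∑ y ∈ Ω ℓ, ν ℓ y) / (1 - ∑ y ∈ Ω ℓ, ν ℓ y))
      ≤ Δ * (μ S).toReal := by
    rw [Finset.mul_sum]
    calc ∑ m ∈ L, (μ S).toReal ^ 2 *
          ∏ ℓ ∈ m, (∑ y ∈ Ω ℓ, ν ℓ y) / (1 - ∑ y ∈ Ω ℓ, ν ℓ y)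
        ≤ ∑ m ∈ L, ∑ b ∈ Fintype.piFinset
            (fun ℓ => if ℓ ∈ m then (B ℓ).erase 1 else {(1 : Y ℓ → ℂ)}),
          ‖∫ x, α x * ∏ ℓ ∈ m, b ℓ (ρ ℓ x) ∂μ‖ ^ 2 :=
          Finset.sum_le_sum key
      _ ≤ Δ * ∫ x, ‖α x‖ ^ 2 ∂μ := hΔ α hα2
      _ = Δ * (μ S).toReal := by rw [hαint]
  rcases eq_or_lt_of_le (ENNReal.toReal_nonneg (a := μ S)) with hz | hpos
  · rw [← hz, zero_mul]
    exact hΔ0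
  · nlinarith [hsum2, hpos]
end

section
/- Let H be a finite group, H^g a normal subgroup with abelian quotient Γ = H/H^g, α ∈ Γ, and Y the set of conjugacy classes of H mapping to α. For irreducible characters χ_π, χ_τ of H, define ⟨f,g⟩ = (1/|H^g|) ∑_{y♯∈Y} |y♯| f(y♯) conj(g(y♯)). Then ⟨χ_π, χ_τ⟩ = 0 if the restrictions of π and τ to H^g are not isomorphic or if χ_π vanishes identically on Y; otherwise, choosing a character ψ of Γ with π⊗ψ ≅ τ, one has ⟨χ_π, χ_τ⟩ = conj(ψ(α)) · |Γ̂^π|, where Γ̂^π = {ψ ∈ Γ̂ : π ≅ π⊗ψ}. -/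
open CategoryTheory Finset Polynomial

namespace CosetCharAux

noncomputable section

lemma trace_inv_eq_conj_trace {V : Type} [AddCommGroup V] [Module ℂ V] [FiniteDimensional ℂ V]
    (A B : Module.End ℂ V) (hBA : B * A = 1)
    {n : ℕ} (hn : n ≠ 0) (hA : A ^ n = 1) :
    LinearMap.trace ℂ V B = (starRingEnd ℂ) (LinearMap.trace ℂ V A) := by
  classical
  have hsq : Squarefree ((X : ℂ[X]) ^ n - C 1) :=
    (Polynomial.separable_X_pow_sub_C (1 : ℂ)
      (by exact_mod_cast Nat.cast_ne_zero.mpr hn) one_ne_zero).squarefree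
  have hss : A.IsSemisimple :=
    Module.End.isSemisimple_of_squarefree_aeval_eq_zero hsq
      (by simp [map_sub, hA])
  have heig : ∀ μ : ℂ, A.maxGenEigenspace μ = A.eigenspace μ :=
    hss.isFinitelySemisimple.maxGenEigenspace_eq_eigenspace
  have hTop : ⨆ μ : ℂ, A.eigenspace μ = ⊤ := by
    have := Module.End.iSup_maxGenEigenspace_eq_top A
    simpa [heig] using this
  have hInd := A.eigenspaces_iSupIndep
  have hInt : DirectSum.IsInternal A.eigenspace :=
    (DirectSum.isInternal_submodule_iff_iSupIndep_and_iSup_eq_top _).mpr ⟨hInd, hTop⟩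
  have hfin : {μ : ℂ | A.eigenspace μ ≠ ⊥}.Finite :=
    WellFoundedGT.finite_ne_bot_of_iSupIndep hInd
  -- facts about eigenvalues
  have hmu : ∀ μ : ℂ, A.eigenspace μ ≠ ⊥ → μ ^ n = 1 := by
    intro μ hbot
    obtain ⟨x, hx, hx0⟩ := Submodule.exists_mem_ne_zero_of_ne_bot hbot
    have hxeig : A x = μ • x := Module.End.mem_eigenspace_iff.mp hx
    have hpow : ∀ k : ℕ, (A ^ k) x = μ ^ k • x := by
      intro k
      induction k with
      | zero => simp
      | succ k ih =>
          rw [pow_succ', Module.End.mul_apply, ih, map_smul, hxeig, smul_smul, pow_succ', mul_comm]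
    have h := hpow n
    rw [hA] at h
    have h1 : ((1 : ℂ) - μ ^ n) • x = 0 := by
      rw [sub_smul, one_smul, ← h]; simp
    rcases smul_eq_zero.mp h1 with h2 | h2
    · exact (sub_eq_zero.mp h2).symm
    · exact absurd h2 hx0
  have hmu0 : ∀ μ : ℂ, A.eigenspace μ ≠ ⊥ → μ ≠ 0 := by
    intro μ hbot h0
    have := hmu μ hbot
    rw [h0, zero_pow hn] at this
    exact zero_ne_one this
  have hmapA : ∀ μ : ℂ, Set.MapsTo A (A.eigenspace μ) (A.eigenspace μ) := by
    intro μ x hx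
    have hxeig : A x = μ • x := Module.End.mem_eigenspace_iff.mp hx
    show A x ∈ A.eigenspace μ
    rw [hxeig]
    exact Submodule.smul_mem _ _ hx
  have hBx : ∀ (μ : ℂ), μ ≠ 0 → ∀ x ∈ A.eigenspace μ, B x = μ⁻¹ • x := by
    intro μ hμ0 x hx
    have hxeig : A x = μ • x := Module.End.mem_eigenspace_iff.mp hx
    have h1 : x = μ • B x := by
      have h2 : B (A x) = x := by rw [← Module.End.mul_apply, hBA]; simp
      rw [hxeig, map_smul] at h2
      exact h2.symm
    rw [eq_comm, inv_smul_eq_iff₀ hμ0]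
    exact h1
  have hmapB : ∀ μ : ℂ, Set.MapsTo B (A.eigenspace μ) (A.eigenspace μ) := by
    intro μ x hx
    by_cases hbot : A.eigenspace μ = ⊥
    · have hx0 : x = 0 := by
        rw [hbot] at hx
        simpa using hx
      show B x ∈ A.eigenspace μ
      rw [hx0, map_zero]
      exact Submodule.zero_mem _
    · show B x ∈ A.eigenspace μ
      rw [hBx μ (hmu0 μ hbot) x hx]
      exact Submodule.smul_mem _ _ hx
  have htrA := LinearMap.trace_eq_sum_trace_restrict' hInt hfin hmapA
  have htrB := LinearMap.trace_eq_sum_trace_restrict' hInt hfin hmapB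
  have hresA : ∀ μ ∈ hfin.toFinset,
      LinearMap.trace ℂ (A.eigenspace μ) (A.restrict (hmapA μ))
        = μ * (Module.finrank ℂ (A.eigenspace μ) : ℂ) := by
    intro μ _
    have h1 : A.restrict (hmapA μ) = μ • (1 : Module.End ℂ (A.eigenspace μ)) := by
      ext x
      simp only [LinearMap.restrict_coe_apply, LinearMap.smul_apply, Module.End.one_apply,
        SetLike.val_smul]
      exact Module.End.mem_eigenspace_iff.mp x.2
    rw [h1, map_smul, smul_eq_mul, LinearMap.trace_one]
  have hresB : ∀ μ ∈ hfin.toFinset,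
      LinearMap.trace ℂ (A.eigenspace μ) (B.restrict (hmapB μ))
        = μ⁻¹ * (Module.finrank ℂ (A.eigenspace μ) : ℂ) := by
    intro μ hμ
    have hbot : A.eigenspace μ ≠ ⊥ := by simpa using hμ
    have h1 : B.restrict (hmapB μ) = μ⁻¹ • (1 : Module.End ℂ (A.eigenspace μ)) := by
      ext x
      simp only [LinearMap.restrict_coe_apply, LinearMap.smul_apply, Module.End.one_apply,
        SetLike.val_smul]
      exact hBx μ (hmu0 μ hbot) x.1 x.2
    rw [h1, map_smul, smul_eq_mul, LinearMap.trace_one]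
  rw [htrA, htrB, Finset.sum_congr rfl hresB, Finset.sum_congr rfl hresA, map_sum]
  refine Finset.sum_congr rfl ?_
  intro μ hμ
  have hbot : A.eigenspace μ ≠ ⊥ := by simpa using hμ
  have hnorm : ‖μ‖ = 1 := Complex.norm_eq_one_of_pow_eq_one (hmu μ hbot) hn
  rw [map_mul, ← Complex.inv_eq_conj hnorm]
  congr 1
  simp

end
end CosetCharAux

namespace CosetCharAux2

noncomputable section

variable {H : Type} [Group H]

/-- The homomorphism `g ↦ ψ g⁻¹`. -/
def invHom (ψ : H →* ℂ) : H →* ℂ where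
  toFun g := ψ g⁻¹
  map_one' := by simp
  map_mul' a b := by
    show ψ (a * b)⁻¹ = ψ a⁻¹ * ψ b⁻¹
    rw [mul_inv_rev, map_mul, mul_comm]

lemma invHom_mul (ψ : H →* ℂ) (g : H) : invHom ψ g * ψ g = 1 := by
  simp only [invHom, MonoidHom.coe_mk, OneHom.coe_mk]
  rw [← map_mul, inv_mul_cancel, map_one]

lemma mul_invHom (ψ : H →* ℂ) (g : H) : ψ g * invHom ψ g = 1 := by
  rw [mul_comm]; exact invHom_mul ψ g

/-- Twist of a representation by a one-dimensional character. -/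
def twistRep (ψ : H →* ℂ) (X : FDRep ℂ H) : Representation ℂ H X where
  toFun g := ψ g • X.ρ g
  map_one' := by simp
  map_mul' g h := by
    ext v
    simp only [map_mul, LinearMap.smul_apply, Module.End.mul_apply, map_smul, smul_smul,
      mul_comm]

def twist (ψ : H →* ℂ) (X : FDRep ℂ H) : FDRep ℂ H := FDRep.of (twistRep ψ X)

lemma twist_ρ (ψ : H →* ℂ) (X : FDRep ℂ H) (g : H) :
    (twist ψ X).ρ g = ψ g • X.ρ g := rfl

lemma twist_char (ψ : H →* ℂ) (X : FDRep ℂ H) (g : H) :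
    (twist ψ X).character g = ψ g * X.character g := by
  show LinearMap.trace ℂ _ ((twist ψ X).ρ g) = _
  rw [twist_ρ]
  show LinearMap.trace ℂ X (ψ g • X.ρ g) = _
  rw [map_smul, smul_eq_mul]
  rfl

lemma hom_comm_apply' {X Y : FDRep ℂ H} (f : X ⟶ Y) (g : H) (v : X) :
    f.hom (X.ρ g v) = Y.ρ g (f.hom v) :=
  LinearMap.congr_fun (congrArg (fun φ => φ.hom.hom) (f.comm g)) v

end
end CosetCharAux2

namespace CosetCharAux3
open CosetCharAux2
noncomputable section

variable {H : Type} [Group H]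

/-- Transfer a morphism into a twisted target to a morphism from the oppositely twisted source. -/
def untwistHom (ψ : H →* ℂ) {Y V : FDRep ℂ H} (f : Y ⟶ twist ψ V) :
    twist (invHom ψ) Y ⟶ V where
  hom := f.hom
  comm g := by
    ext v
    show f.hom ((twist (invHom ψ) Y).ρ g v) = V.ρ g (f.hom v)
    have h0 : (twist (invHom ψ) Y).ρ g v = invHom ψ g • (Y.ρ g v) := rfl
    rw [h0, map_smul, hom_comm_apply' f g v]
    have h1 : (twist ψ V).ρ g (f.hom v) = ψ g • (V.ρ g (f.hom v)) := rfl
    rw [h1]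
    exact (smul_smul _ _ _).trans (by rw [invHom_mul]; exact one_smul _ _)

/-- Transfer a morphism out of a twisted source to a morphism into the oppositely twisted
target. -/
def retwistHom (ψ : H →* ℂ) {Z Y : FDRep ℂ H} (g : Z ⟶ twist (invHom ψ) Y) :
    twist ψ Z ⟶ Y where
  hom := g.hom
  comm x := by
    ext v
    show g.hom ((twist ψ Z).ρ x v) = Y.ρ x (g.hom v)
    have h0 : (twist ψ Z).ρ x v = ψ x • (Z.ρ x v) := rfl
    rw [h0, map_smul, hom_comm_apply' g x v]
    have h1 : (twist (invHom ψ) Y).ρ x (g.hom v) = invHom ψ x • (Y.ρ x (g.hom v)) := rfl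
    rw [h1]
    exact (smul_smul _ _ _).trans (by rw [mul_invHom]; exact one_smul _ _)

/-- Transfer a morphism into `V` to a morphism into the twist of `V`. -/
def toTwistHom (ψ : H →* ℂ) {V Y : FDRep ℂ H} (h : V ⟶ twist (invHom ψ) Y) :
    twist ψ V ⟶ Y := retwistHom ψ h

/-- Transfer a morphism out of a twisted source. -/
def fromTwistHom (ψ : H →* ℂ) {V Y : FDRep ℂ H} (i : twist ψ V ⟶ Y) :
    V ⟶ twist (invHom ψ) Y where
  hom := i.hom
  comm g := by
    ext v
    show i.hom (V.ρ g v) = (twist (invHom ψ) Y).ρ g (i.hom v)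
    have h1 : V.ρ g v = invHom ψ g • (twist ψ V).ρ g v := by
      have h2 : (twist ψ V).ρ g v = ψ g • (V.ρ g v) := rfl
      rw [h2]
      exact ((smul_smul _ _ _).trans (by rw [invHom_mul, one_smul])).symm
    have h3 : (twist (invHom ψ) Y).ρ g (i.hom v) = invHom ψ g • (Y.ρ g (i.hom v)) := rfl
    rw [h1, map_smul, hom_comm_apply' i g v, h3]

lemma action_hom_ext {X Y : FDRep ℂ H} (f g : X ⟶ Y) (h : f.hom = g.hom) : f = g :=
  Action.Hom.ext h

lemma hom_eq_zero_iff {X Y : FDRep ℂ H} (f : X ⟶ Y) : f = 0 ↔ f.hom = 0 := by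
  constructor
  · intro h; rw [h]; exact Action.zero_hom
  · intro h; exact action_hom_ext _ _ (by rw [h, Action.zero_hom])

lemma simple_twist (ψ : H →* ℂ) (V : FDRep ℂ H) [Simple V] : Simple (twist ψ V) := by
  constructor
  intro Y f hmono
  let f' : twist (invHom ψ) Y ⟶ V := untwistHom ψ f
  have hmono' : Mono f' := by
    constructor
    intro Z u v huv
    have hhom : (retwistHom ψ u ≫ f) = (retwistHom ψ v ≫ f) := by
      refine action_hom_ext _ _ ?_
      have h1 : (retwistHom ψ u ≫ f).hom = (u ≫ f').hom := rfl
      have h2 : (retwistHom ψ v ≫ f).hom = (v ≫ f').hom := rfl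
      rw [h1, h2, huv]
    have := (cancel_mono f).mp hhom
    refine action_hom_ext _ _ ?_
    have h3 : u.hom = (retwistHom ψ u).hom := rfl
    have h4 : v.hom = (retwistHom ψ v).hom := rfl
    rw [h3, h4, this]
  have hiso : IsIso f ↔ IsIso f' := by
    constructor
    · intro hf
      refine ⟨fromTwistHom ψ (inv f), ?_, ?_⟩
      · refine action_hom_ext _ _ ?_
        show f.hom ≫ (inv f).hom = _
        have : (f ≫ inv f).hom = f.hom ≫ (inv f).hom := rfl
        rw [← this, IsIso.hom_inv_id]
        rfl
      · refine action_hom_ext _ _ ?_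
        show (inv f).hom ≫ f.hom = _
        have : (inv f ≫ f).hom = (inv f).hom ≫ f.hom := rfl
        rw [← this, IsIso.inv_hom_id]
        rfl
    · intro hf'
      refine ⟨toTwistHom ψ (inv f'), ?_, ?_⟩
      · refine action_hom_ext _ _ ?_
        show f.hom ≫ (inv f').hom = _
        have : (f' ≫ inv f').hom = f.hom ≫ (inv f').hom := rfl
        rw [← this, IsIso.hom_inv_id]
        rfl
      · refine action_hom_ext _ _ ?_
        show (inv f').hom ≫ f.hom = _
        have : (inv f' ≫ f').hom = (inv f').hom ≫ f.hom := rfl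
        rw [← this, IsIso.inv_hom_id]
        rfl
  have hzero : f ≠ 0 ↔ f' ≠ 0 := by
    have h1 : (f = 0) ↔ (f' = 0) := by rw [hom_eq_zero_iff, hom_eq_zero_iff]; exact Iff.rfl
    exact not_congr h1
  rw [hiso, hzero]
  exact Simple.mono_isIso_iff_nonzero f'

end
end CosetCharAux3

namespace CosetCharAux4
open CosetCharAux CosetCharAux2 CosetCharAux3
noncomputable section

variable {H : Type} [Group H] [Fintype H]

lemma char_inv (X : FDRep ℂ H) (g : H) :
    X.character g⁻¹ = (starRingEnd ℂ) (X.character g) :=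
  trace_inv_eq_conj_trace (X.ρ g) (X.ρ g⁻¹)
    (by rw [← map_mul, inv_mul_cancel, map_one])
    Fintype.card_ne_zero
    (by rw [← map_pow, pow_card_eq_one, map_one])

lemma monoidHom_inv_eq_conj (ψ : H →* ℂ) (g : H) :
    ψ g⁻¹ = (starRingEnd ℂ) (ψ g) := by
  have hpow : (ψ g) ^ (Fintype.card H) = 1 := by
    rw [← map_pow, pow_card_eq_one, map_one]
  have hnorm : ‖ψ g‖ = 1 := Complex.norm_eq_one_of_pow_eq_one hpow Fintype.card_ne_zero
  have h1 : ψ g * ψ g⁻¹ = 1 := by rw [← map_mul, mul_inv_cancel, map_one]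
  rw [← Complex.inv_eq_conj hnorm]
  exact eq_inv_of_mul_eq_one_right h1

open scoped Classical in
lemma twisted_orthogonality (ψ : H →* ℂ) (V W : FDRep ℂ H) [Simple V] [Simple W] :
    ∑ y : H, ψ y * V.character y * W.character y⁻¹
      = if ∀ y : H, W.character y = ψ y * V.character y
        then (Fintype.card H : ℂ) else 0 := by
  letI : Fintype H := ‹Fintype H›
  letI : Invertible ((Nat.card H : ℂ)) :=
    invertibleOfNonzero (Nat.cast_ne_zero.mpr Nat.card_pos.ne')
  haveI : Simple (twist ψ V) := simple_twist ψ V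
  have key := FDRep.char_orthonormal (k := ℂ) (G := H) (twist ψ V) W
  have hL : ∑ y : H, ψ y * V.character y * W.character y⁻¹
      = ∑ y : H, (twist ψ V).character y * W.character y⁻¹ := by
    refine Finset.sum_congr rfl fun y _ => ?_
    rw [twist_char, mul_assoc]
  by_cases hc : ∀ y : H, W.character y = ψ y * V.character y
  · have hWchar : (twist ψ V).character = W.character := by
      funext y
      rw [twist_char, ← hc y]
    have hne : Nonempty (twist ψ V ≅ W) := by
      by_contra hno
      rw [if_neg hno] at key
      have key2 := FDRep.char_orthonormal (k := ℂ) (G := H) W W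
      rw [if_pos ⟨Iso.refl W⟩] at key2
      rw [hWchar] at key
      rw [key2] at key
      exact one_ne_zero (by exact_mod_cast key : (1 : ℂ) = 0)
    rw [if_pos hne] at key
    rw [if_pos hc, hL]
    have h3 := congrArg (fun z => (Nat.card H : ℂ) * z) key
    simp only [smul_eq_mul, ← mul_assoc, Nat.cast_one, Nat.cast_zero] at h3
    rw [mul_inv_cancel₀ (Nat.cast_ne_zero.mpr Nat.card_pos.ne'), one_mul, mul_one,
      Nat.card_eq_fintype_card] at h3
    exact h3
  · have hno : ¬ Nonempty (twist ψ V ≅ W) := by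
      rintro ⟨i⟩
      refine hc fun y => ?_
      have := congrFun (FDRep.char_iso i) y
      rw [twist_char] at this
      exact this.symm
    rw [if_neg hno] at key
    rw [if_neg hc, hL]
    have h3 := congrArg (fun z => (Nat.card H : ℂ) * z) key
    simp only [smul_eq_mul, ← mul_assoc, Nat.cast_one, Nat.cast_zero] at h3
    rw [mul_inv_cancel₀ (Nat.cast_ne_zero.mpr Nat.card_pos.ne'), one_mul, mul_zero] at h3
    exact h3

end
end CosetCharAux4

namespace CosetCharAux5
noncomputable section

variable {H : Type} [Group H]

/-- Restrict a character of the quotient to a character of `H` trivial on `N`. -/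
def restrictTriv (N : Subgroup H) [N.Normal] (χ : AddChar (Additive (H ⧸ N)) ℂ) :
    {ψ : H →* ℂ // ∀ n ∈ N, ψ n = 1} :=
  ⟨{ toFun := fun h => χ (Additive.ofMul (QuotientGroup.mk (s := N) h))
     map_one' := by simpa using χ.map_zero_eq_one
     map_mul' := fun a b => by
       show χ (Additive.ofMul (QuotientGroup.mk (s := N) (a * b))) =
         χ (Additive.ofMul (QuotientGroup.mk a)) * χ (Additive.ofMul (QuotientGroup.mk b))
       rw [QuotientGroup.mk_mul, ofMul_mul]
       exact χ.map_add_eq_mul _ _ },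
   fun n hn => by
     have h1 : (QuotientGroup.mk n : H ⧸ N) = 1 := (QuotientGroup.eq_one_iff n).mpr hn
     show χ (Additive.ofMul (QuotientGroup.mk (s := N) n)) = 1
     rw [h1]
     exact χ.map_zero_eq_one⟩

/-- Lift a character of `H` trivial on `N` to the quotient. -/
def liftOf (N : Subgroup H) [N.Normal] (ψ : {ψ : H →* ℂ // ∀ n ∈ N, ψ n = 1}) :
    H ⧸ N →* ℂ :=
  QuotientGroup.lift N ψ.1 (fun n hn => MonoidHom.mem_ker.mpr (ψ.2 n hn))

/-- Characters of the quotient correspond to characters of `H` trivial on `N`. -/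
def dualEquiv (N : Subgroup H) [N.Normal] :
    AddChar (Additive (H ⧸ N)) ℂ ≃ {ψ : H →* ℂ // ∀ n ∈ N, ψ n = 1} where
  toFun χ := restrictTriv N χ
  invFun ψ :=
    { toFun := fun γ => liftOf N ψ γ.toMul
      map_zero_eq_one' := by simp
      map_add_eq_mul' := fun a b => by simp }
  left_inv χ := by
    ext γ
    obtain ⟨h, hh⟩ := QuotientGroup.mk_surjective (Additive.toMul γ)
    have hγ : γ = Additive.ofMul (QuotientGroup.mk (s := N) h) := by rw [hh]; rfl
    rw [hγ]
    show liftOf N (restrictTriv N χ)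
        (Additive.toMul (Additive.ofMul (QuotientGroup.mk (s := N) h)))
      = χ (Additive.ofMul (QuotientGroup.mk (s := N) h))
    rw [toMul_ofMul]
    show QuotientGroup.lift N (restrictTriv N χ).1 _ (QuotientGroup.mk h)
      = χ (Additive.ofMul (QuotientGroup.mk (s := N) h))
    rw [QuotientGroup.lift_mk]
    rfl
  right_inv ψ := by
    ext h
    show QuotientGroup.lift N ψ.1 (fun n hn => MonoidHom.mem_ker.mpr (ψ.2 n hn)) (QuotientGroup.mk h) = ψ.1 h
    rw [QuotientGroup.lift_mk]
end
end CosetCharAux5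

open CosetCharAux CosetCharAux2 CosetCharAux3 CosetCharAux4 CosetCharAux5


/-- Inner product formula for characters on a coset (Lemma `lm-group-theory` (1) of
Kowalski, "The principle of the large sieve").  `H` is a finite group, `N ◁ H` with
abelian quotient `Γ = H/N`, `α ∈ Γ`, and the inner product is
`⟨f,g⟩ = |N|⁻¹ ∑_{y ↦ α} f(y) conj(g(y))`.  Characters `ψ` of `Γ` are represented by
homomorphisms `H →* ℂ` trivial on `N`, and `π ⊗ ψ ≅ τ` by the character identity
`χ_τ = ψ · χ_π`. -/
theorem coset_character_inner_product
    {H : Type} [Group H] [Fintype H]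
    (N : Subgroup H) [N.Normal] [DecidableEq (H ⧸ N)]
    (hab : ∀ a b : H ⧸ N, a * b = b * a)
    (α : H ⧸ N)
    (V W : FDRep ℂ H) [Simple V] [Simple W] :
    -- vanishing case: restrictions to `N` not isomorphic, or `χ_V` vanishes on `Y`
    (((∃ n : H, n ∈ N ∧ V.character n ≠ W.character n) ∨
        (∀ y : H, (QuotientGroup.mk y : H ⧸ N) = α → V.character y = 0)) →
      (Nat.card N : ℂ)⁻¹ *
          ∑ y : H, (if (QuotientGroup.mk y : H ⧸ N) = α
            then V.character y * (starRingEnd ℂ) (W.character y) else 0)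
        = 0)
    ∧
    -- main case: `τ ≅ π ⊗ ψ` and `χ_V` does not vanish identically on `Y`
    (∀ ψ : H →* ℂ, (∀ n ∈ N, ψ n = 1) →
      (∀ y : H, W.character y = ψ y * V.character y) →
      (∃ y : H, (QuotientGroup.mk y : H ⧸ N) = α ∧ V.character y ≠ 0) →
      ∀ a : H, (QuotientGroup.mk a : H ⧸ N) = α →
      (Nat.card N : ℂ)⁻¹ *
          ∑ y : H, (if (QuotientGroup.mk y : H ⧸ N) = α
            then V.character y * (starRingEnd ℂ) (W.character y) else 0)
        = (starRingEnd ℂ) (ψ a) *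
          (Nat.card {ψ' : H →* ℂ // (∀ n ∈ N, ψ' n = 1) ∧
            ∀ y : H, ψ' y * V.character y = V.character y} : ℂ)) := by
  classical
  letI : CommGroup (H ⧸ N) := { mul_comm := hab }
  letI : Fintype (H ⧸ N) :=
    Fintype.ofSurjective (QuotientGroup.mk (s := N)) QuotientGroup.mk_surjective
  letI ftD : Fintype {ψ : H →* ℂ // ∀ n ∈ N, ψ n = 1} := Fintype.ofEquiv _ (dualEquiv N)
  have hcardΓ : (Fintype.card (H ⧸ N) : ℂ) ≠ 0 := Nat.cast_ne_zero.mpr Fintype.card_ne_zero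
  have hcardN : (Nat.card N : ℂ) ≠ 0 := by
    have : 0 < Nat.card N := Nat.card_pos
    exact_mod_cast this.ne'
  have hHcard : (Fintype.card H : ℂ) = (Fintype.card (H ⧸ N) : ℂ) * (Nat.card N : ℂ) := by
    have h1 : N.index * Nat.card N = Nat.card H := Subgroup.index_mul_card N
    have h2 : N.index = Fintype.card (H ⧸ N) := by
      rw [Subgroup.index, Nat.card_eq_fintype_card]
    have h3 : Nat.card H = Fintype.card H := Nat.card_eq_fintype_card
    rw [h2, h3] at h1
    rw [← h1]
    push_cast
    ring
  -- orthogonality of quotient characters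
  have hsum_dual : ∀ x : H,
      (∑ ψ : {ψ : H →* ℂ // ∀ n ∈ N, ψ n = 1}, ψ.1 x)
        = if (QuotientGroup.mk x : H ⧸ N) = 1 then (Fintype.card (H ⧸ N) : ℂ) else 0 := by
    intro x
    rw [← Equiv.sum_comp (dualEquiv N) (fun ψ : {ψ : H →* ℂ // ∀ n ∈ N, ψ n = 1} => ψ.1 x)]
    have h1 : ∀ χ : AddChar (Additive (H ⧸ N)) ℂ,
        ((dualEquiv N) χ).1 x = χ (Additive.ofMul (QuotientGroup.mk (s := N) x)) := fun _ => rfl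
    simp_rw [h1]
    rw [AddChar.sum_apply_eq_ite]
    have h2 : (Additive.ofMul (QuotientGroup.mk (s := N) x) = 0)
        ↔ ((QuotientGroup.mk x : H ⧸ N) = 1) := by
      constructor
      · intro h; exact h
      · intro h; exact h
    have h3 : (Fintype.card (Additive (H ⧸ N)) : ℂ) = (Fintype.card (H ⧸ N) : ℂ) := by
      congr 1
      exact Fintype.card_congr Additive.toMul
    rw [if_congr h2 h3 rfl]
  -- the key identity
  have KEY : ∀ a : H, (QuotientGroup.mk a : H ⧸ N) = α →
      (Nat.card N : ℂ)⁻¹ *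
          ∑ y : H, (if (QuotientGroup.mk y : H ⧸ N) = α
            then V.character y * (starRingEnd ℂ) (W.character y) else 0)
        = ∑ ψ : {ψ : H →* ℂ // ∀ n ∈ N, ψ n = 1}, (starRingEnd ℂ) (ψ.1 a) *
            (if ∀ y : H, W.character y = ψ.1 y * V.character y then 1 else 0) := by
    intro a ha
    have hstep : ∀ y : H,
        (if (QuotientGroup.mk y : H ⧸ N) = α
          then V.character y * (starRingEnd ℂ) (W.character y) else 0)
          = (Fintype.card (H ⧸ N) : ℂ)⁻¹ *
              ∑ ψ : {ψ : H →* ℂ // ∀ n ∈ N, ψ n = 1},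
                ψ.1 a⁻¹ * (ψ.1 y * V.character y * W.character y⁻¹) := by
      intro y
      have h2 : ∑ ψ : {ψ : H →* ℂ // ∀ n ∈ N, ψ n = 1},
          ψ.1 a⁻¹ * (ψ.1 y * V.character y * W.character y⁻¹)
          = (∑ ψ : {ψ : H →* ℂ // ∀ n ∈ N, ψ n = 1}, ψ.1 (y * a⁻¹))
              * (V.character y * W.character y⁻¹) := by
        rw [Finset.sum_mul]
        refine Finset.sum_congr rfl fun ψ _ => ?_
        rw [map_mul]
        ring
      rw [h2, hsum_dual (y * a⁻¹)]
      have hcond : ((QuotientGroup.mk (y * a⁻¹) : H ⧸ N) = 1)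
          ↔ ((QuotientGroup.mk y : H ⧸ N) = α) := by
        rw [QuotientGroup.mk_mul, QuotientGroup.mk_inv, ha, mul_inv_eq_one]
      by_cases hy : (QuotientGroup.mk y : H ⧸ N) = α
      · rw [if_pos hy, if_pos (hcond.mpr hy), char_inv W y, ← mul_assoc,
          inv_mul_cancel₀ hcardΓ, one_mul]
      · rw [if_neg hy, if_neg (fun h => hy (hcond.mp h)), zero_mul, mul_zero]
    rw [Finset.sum_congr rfl (fun y _ => hstep y), ← Finset.mul_sum, Finset.sum_comm]
    have hinner : ∀ ψ : {ψ : H →* ℂ // ∀ n ∈ N, ψ n = 1},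
        ∑ y : H, ψ.1 a⁻¹ * (ψ.1 y * V.character y * W.character y⁻¹)
          = ψ.1 a⁻¹ * ((Fintype.card H : ℂ) *
              (if ∀ y : H, W.character y = ψ.1 y * V.character y then 1 else 0)) := by
      intro ψ
      rw [← Finset.mul_sum, twisted_orthogonality ψ.1 V W]
      congr 1
      by_cases hc : ∀ y : H, W.character y = ψ.1 y * V.character y
      · rw [if_pos hc, if_pos hc, mul_one]
      · rw [if_neg hc, if_neg hc, mul_zero]
    rw [Finset.sum_congr rfl (fun ψ _ => hinner ψ), Finset.mul_sum, Finset.mul_sum]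
    refine Finset.sum_congr rfl fun ψ _ => ?_
    rw [monoidHom_inv_eq_conj ψ.1 a, hHcard]
    field_simp
  constructor
  · -- vanishing case
    rintro (⟨n, hnN, hne⟩ | hzero)
    · rw [KEY (Quotient.out α) (QuotientGroup.out_eq' α)]
      refine Finset.sum_eq_zero fun ψ _ => ?_
      have hc : ¬ ∀ y : H, W.character y = ψ.1 y * V.character y := by
        intro hcond
        exact hne (by rw [hcond n, ψ.2 n hnN, one_mul])
      rw [if_neg hc, mul_zero]
    · have : ∑ y : H, (if (QuotientGroup.mk y : H ⧸ N) = α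
          then V.character y * (starRingEnd ℂ) (W.character y) else 0) = 0 := by
        refine Finset.sum_eq_zero fun y _ => ?_
        by_cases hy : (QuotientGroup.mk y : H ⧸ N) = α
        · rw [if_pos hy, hzero y hy, zero_mul]
        · rw [if_neg hy]
      rw [this, mul_zero]
  · -- main case
    intro ψ₀ hψ₀N hψ₀W ⟨y₀, hy₀, hV0⟩ a ha
    rw [KEY a ha]
    have hψa : ∀ ψ : {ψ : H →* ℂ // ∀ n ∈ N, ψ n = 1},
        (∀ y : H, W.character y = ψ.1 y * V.character y) → ψ.1 a = ψ₀ a := by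
      intro ψ hc
      have h1 : ψ.1 y₀ = ψ₀ y₀ :=
        mul_right_cancel₀ hV0 (by rw [← hc y₀, ← hψ₀W y₀])
      have hn : y₀⁻¹ * a ∈ N := by
        rw [← QuotientGroup.eq]
        rw [hy₀, ha]
      have h3 : ψ.1 a = ψ.1 y₀ * ψ.1 (y₀⁻¹ * a) := by
        rw [← map_mul]
        congr 1
        group
      have h4 : ψ₀ a = ψ₀ y₀ * ψ₀ (y₀⁻¹ * a) := by
        rw [← map_mul]
        congr 1
        group
      rw [h3, h4, ψ.2 _ hn, hψ₀N _ hn, h1]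
    have hterm : ∀ ψ : {ψ : H →* ℂ // ∀ n ∈ N, ψ n = 1},
        (starRingEnd ℂ) (ψ.1 a) *
            (if ∀ y : H, W.character y = ψ.1 y * V.character y then 1 else 0)
          = (if ∀ y : H, W.character y = ψ.1 y * V.character y
              then (starRingEnd ℂ) (ψ₀ a) else 0) := by
      intro ψ
      by_cases hc : ∀ y : H, W.character y = ψ.1 y * V.character y
      · rw [if_pos hc, if_pos hc, mul_one, hψa ψ hc]
      · rw [if_neg hc, if_neg hc, mul_zero]
    rw [Finset.sum_congr rfl (fun ψ _ => hterm ψ)]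
    rw [Finset.sum_ite, Finset.sum_const, Finset.sum_const_zero, add_zero, nsmul_eq_mul]
    -- count the stabilizer
    have hEquiv : {ψ : {ψ : H →* ℂ // ∀ n ∈ N, ψ n = 1} //
          ∀ y : H, W.character y = ψ.1 y * V.character y}
        ≃ {ψ' : H →* ℂ // (∀ n ∈ N, ψ' n = 1) ∧
            ∀ y : H, ψ' y * V.character y = V.character y} := by
      refine
        { toFun := fun p => ⟨invHom ψ₀ * p.1.1, ?_, ?_⟩
          invFun := fun q => ⟨⟨ψ₀ * q.1, ?_⟩, ?_⟩
          left_inv := ?_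
          right_inv := ?_ }
      · intro n hn
        show invHom ψ₀ n * p.1.1 n = 1
        have h1 : invHom ψ₀ n = ψ₀ n⁻¹ := rfl
        rw [h1, p.1.2 n hn, hψ₀N n⁻¹ (N.inv_mem hn), one_mul]
      · intro y
        show invHom ψ₀ y * p.1.1 y * V.character y = V.character y
        have h1 : p.1.1 y * V.character y = ψ₀ y * V.character y := by
          rw [← p.2 y, hψ₀W y]
        rw [mul_assoc, h1, ← mul_assoc, invHom_mul, one_mul]
      · intro n hn
        show ψ₀ n * q.1 n = 1
        rw [hψ₀N n hn, q.2.1 n hn, mul_one]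
      · intro y
        show W.character y = ψ₀ y * q.1 y * V.character y
        rw [mul_assoc, q.2.2 y, hψ₀W y]
      · intro p
        refine Subtype.ext (Subtype.ext ?_)
        show ψ₀ * (invHom ψ₀ * p.1.1) = p.1.1
        ext y
        show ψ₀ y * (invHom ψ₀ y * p.1.1 y) = p.1.1 y
        rw [← mul_assoc, mul_invHom, one_mul]
      · intro q
        refine Subtype.ext ?_
        show invHom ψ₀ * (ψ₀ * q.1) = q.1
        ext y
        show invHom ψ₀ y * (ψ₀ y * q.1 y) = q.1 y
        rw [← mul_assoc, invHom_mul, one_mul]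
    have hcount : ((Finset.univ.filter
          (fun ψ : {ψ : H →* ℂ // ∀ n ∈ N, ψ n = 1} =>
            ∀ y : H, W.character y = ψ.1 y * V.character y)).card : ℂ)
        = (Nat.card {ψ' : H →* ℂ // (∀ n ∈ N, ψ' n = 1) ∧
            ∀ y : H, ψ' y * V.character y = V.character y} : ℂ) := by
      congr 1
      rw [← Fintype.card_subtype, ← Nat.card_eq_fintype_card]
      exact Nat.card_congr hEquiv
    rw [hcount, mul_comm]
end

section
/- Monotonicity of representation degree sums: let G be a finite group, H ≤ G a subgroup, and p ∈ [1,∞). Then (∑_{ρ ∈ Irr(H)} (dim ρ)^p)^{1/p} ≤ (∑_{π ∈ Irr(G)} (dim π)^p)^{1/p}. Also the maximal degree of an irreducible representation of H is at most the maximal degree of an irreducible representation of G. -/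
open CategoryTheory Finset

namespace DSM
variable {Γ : Type} [Group Γ]

def homOfEquiv {X Y : FDRep ℂ Γ} (f : X →ₗ[ℂ] Y)
    (hf : ∀ (γ : Γ) (v : X), f (X.ρ γ v) = Y.ρ γ (f v)) : X ⟶ Y where
  hom := ConcreteCategory.ofHom f
  comm := fun γ => by ext v; exact hf γ v

theorem hom_equivariant {X Y : FDRep ℂ Γ} (f : X ⟶ Y) (γ : Γ) (v : X) :
    f.hom (X.ρ γ v) = Y.ρ γ (f.hom v) :=
  congrFun (congrArg (fun (g : X.V ⟶ Y.V) => (g : X → Y)) (f.comm γ)) v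

theorem hom_eq_zero_iff {X Y : FDRep ℂ Γ} (f : X ⟶ Y) :
    f = 0 ↔ (ConcreteCategory.hom f.hom : X →ₗ[ℂ] Y) = 0 :=
  ⟨by rintro rfl; rfl, fun h => Action.hom_ext _ _ (FGModuleCat.hom_ext h)⟩

def subrep {W : Type} [AddCommGroup W] [Module ℂ W] (σ : Representation ℂ Γ W)
    (U : Submodule ℂ W) (hU : ∀ (γ : Γ), ∀ x ∈ U, σ γ x ∈ U) :
    Representation ℂ Γ U where
  toFun γ := (σ γ).restrict (hU γ)
  map_one' := by ext x; simp
  map_mul' γ δ := by ext x; simp [LinearMap.restrict_apply]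

theorem subrep_apply {W : Type} [AddCommGroup W] [Module ℂ W] (σ : Representation ℂ Γ W)
    (U : Submodule ℂ W) (hU : ∀ (γ : Γ), ∀ x ∈ U, σ γ x ∈ U) (γ : Γ) (x : U) :
    (subrep σ U hU γ x : W) = σ γ (x : W) := rfl

theorem mono_of_injective {X Y : FDRep ℂ Γ} (f : X ⟶ Y)
    (hf : Function.Injective (ConcreteCategory.hom f.hom : X →ₗ[ℂ] Y)) : Mono f := by
  constructor
  intro Z g₁ g₂ w
  apply Action.hom_ext
  ext v
  apply hf
  have := congrArg (fun (q : Z ⟶ Y) => (q.hom : Z → Y) v) w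
  exact this

/-- concrete irreducibility -/
def IsIrred {W : Type} [AddCommGroup W] [Module ℂ W] (σ : Representation ℂ Γ W) : Prop :=
  Nontrivial W ∧ ∀ (U : Submodule ℂ W), (∀ (γ : Γ), ∀ x ∈ U, σ γ x ∈ U) → U = ⊥ ∨ U = ⊤

theorem nontrivial_of_simple (X : FDRep ℂ Γ) [Simple X] : Nontrivial X := by
  by_contra h
  rw [not_nontrivial_iff_subsingleton] at h
  apply CategoryTheory.id_nonzero X
  rw [hom_eq_zero_iff]
  ext v
  exact (Subsingleton.elim _ _ : _ = (0 : X))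

theorem isIrred_of_simple (X : FDRep ℂ Γ) [Simple X] : IsIrred X.ρ := by
  refine ⟨nontrivial_of_simple X, fun U hU => ?_⟩
  by_cases hbot : U = ⊥
  · exact Or.inl hbot
  right
  let Y : FDRep ℂ Γ := FDRep.of (subrep X.ρ U hU)
  let f : Y ⟶ X := homOfEquiv (U.subtype) (fun γ v => rfl)
  have : Mono f := mono_of_injective f U.injective_subtype
  have hf0 : f ≠ 0 := by
    obtain ⟨x, hx, hx0⟩ := Submodule.exists_mem_ne_zero_of_ne_bot hbot
    intro h
    rw [hom_eq_zero_iff] at h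
    exact hx0 (congrArg (fun (q : Y →ₗ[ℂ] X) => q ⟨x, hx⟩) h)
  have : IsIso f := (Simple.mono_isIso_iff_nonzero f).mpr hf0
  -- surjectivity of the inclusion
  rw [Submodule.eq_top_iff']
  intro w
  have : f ≫ (CategoryTheory.inv f) = 𝟙 Y := IsIso.hom_inv_id f
  have h2 : (CategoryTheory.inv f) ≫ f = 𝟙 X := IsIso.inv_hom_id f
  have := congrArg (fun (q : X ⟶ X) => (q.hom : X → X) w) h2
  simp only [Action.comp_hom, Action.id_hom] at this
  have : f.hom ((CategoryTheory.inv f).hom w) = w := this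
  rw [← this]
  exact ((CategoryTheory.inv f).hom w).2


/-- Schur: an equivariant map between non-isomorphic simple objects vanishes. -/
theorem equivariant_eq_zero {X Y : FDRep ℂ Γ} [Simple X] [Simple Y]
    (hne : ¬ Nonempty (X ≅ Y)) (g : X →ₗ[ℂ] Y)
    (hg : ∀ (γ : Γ) (v : X), g (X.ρ γ v) = Y.ρ γ (g v)) : g = 0 := by
  have h := FDRep.finrank_hom_simple_simple X Y
  rw [if_neg hne] at h
  have hs : Subsingleton (X ⟶ Y) := Module.finrank_zero_iff.mp h
  have : homOfEquiv g hg = 0 := Subsingleton.elim _ _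
  exact (hom_eq_zero_iff _).mp this

/-- Maschke at the representation level. -/
theorem exists_equivariant_retraction [Fintype Γ] {V W : Type}
    [AddCommGroup V] [Module ℂ V] [AddCommGroup W] [Module ℂ W] [FiniteDimensional ℂ W]
    (σ : Representation ℂ Γ V) (τ : Representation ℂ Γ W)
    (i : V →ₗ[ℂ] W) (hi : ∀ (γ : Γ) (v : V), i (σ γ v) = τ γ (i v))
    (hinj : Function.Injective i) :
    ∃ π : W →ₗ[ℂ] V, (∀ (γ : Γ) (w : W), π (τ γ w) = σ γ (π w)) ∧ ∀ v, π (i v) = v := by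
  obtain ⟨π₀, hπ₀⟩ := i.exists_leftInverse_of_injective (LinearMap.ker_eq_bot.mpr hinj)
  have hπ₀' : ∀ v, π₀ (i v) = v := fun v => congrArg (fun q : V →ₗ[ℂ] V => q v) hπ₀
  set c : ℂ := (Fintype.card Γ : ℂ)⁻¹ with hc
  refine ⟨c • ∑ γ : Γ, ((σ γ⁻¹).comp π₀).comp (τ γ), ?_, ?_⟩
  · intro δ w
    simp only [LinearMap.smul_apply, LinearMap.sum_apply, LinearMap.comp_apply, map_smul,
      map_sum]
    congr 1
    refine Fintype.sum_bijective (· * δ) (Group.mulRight_bijective δ) _ _ fun γ => ?_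
    have h1 : τ γ (τ δ w) = τ (γ * δ) w := by rw [map_mul τ γ δ]; rfl
    calc σ γ⁻¹ (π₀ (τ γ (τ δ w)))
        = σ γ⁻¹ (π₀ (τ (γ * δ) w)) := by rw [h1]
      _ = σ (δ * (γ * δ)⁻¹) (π₀ (τ (γ * δ) w)) := by rw [show δ * (γ * δ)⁻¹ = γ⁻¹ by group]
      _ = σ δ (σ (γ * δ)⁻¹ (π₀ (τ (γ * δ) w))) := by rw [map_mul σ δ (γ * δ)⁻¹]; rfl
  · intro v
    simp only [LinearMap.smul_apply, LinearMap.sum_apply, LinearMap.comp_apply]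
    have : ∀ γ : Γ, σ γ⁻¹ (π₀ (τ γ (i v))) = v := by
      intro γ
      rw [← hi γ v, hπ₀']
      have : σ γ⁻¹ (σ γ v) = σ (γ⁻¹ * γ) v := by rw [map_mul]; rfl
      rw [this, inv_mul_cancel, map_one]; rfl
    rw [Finset.sum_congr rfl (fun γ _ => this γ), Finset.sum_const, Finset.card_univ,
      ← Nat.cast_smul_eq_nsmul ℂ, smul_smul, hc, inv_mul_cancel₀, one_smul]
    exact_mod_cast Fintype.card_ne_zero

theorem simple_of_isIrred {W : Type} [AddCommGroup W] [Module ℂ W] [FiniteDimensional ℂ W]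
    (σ : Representation ℂ Γ W) (h : IsIrred σ) : Simple (FDRep.of σ) := by
  obtain ⟨hnt, hirr⟩ := h
  constructor
  intro Y f hm
  constructor
  · intro hiso h0
    have h2 : (CategoryTheory.inv f) ≫ f = 𝟙 (FDRep.of σ) := IsIso.inv_hom_id f
    have h0' : (ConcreteCategory.hom f.hom : Y →ₗ[ℂ] W) = 0 := (hom_eq_zero_iff f).mp h0
    have hz : ∀ w : W, w = 0 := by
      intro w
      have hw := congrArg (fun q : FDRep.of σ ⟶ FDRep.of σ => (q.hom : W → W) w) h2
      simp only [Action.comp_hom, Action.id_hom] at hw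
      have hw2 : (ConcreteCategory.hom f.hom : Y →ₗ[ℂ] W) ((CategoryTheory.inv f).hom w) = w := hw
      rw [h0'] at hw2
      simpa using hw2.symm
    obtain ⟨w, w', hne⟩ := hnt
    exact hne ((hz w).trans (hz w').symm)
  · intro hf0
    -- f.hom is injective
    have hinj : Function.Injective (ConcreteCategory.hom f.hom : Y →ₗ[ℂ] W) := by
      have hK : ∀ (γ : Γ), ∀ x ∈ LinearMap.ker (ConcreteCategory.hom f.hom : Y →ₗ[ℂ] W), Y.ρ γ x ∈ LinearMap.ker (ConcreteCategory.hom f.hom : Y →ₗ[ℂ] W) := by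
        intro γ x hx
        rw [LinearMap.mem_ker] at hx ⊢
        exact (hom_equivariant f γ x).trans (by rw [show (ConcreteCategory.hom f.hom : Y →ₗ[ℂ] W) x = 0 from hx, map_zero])
      let K : FDRep ℂ Γ := FDRep.of (subrep Y.ρ _ hK)
      let κ : K ⟶ Y := homOfEquiv ((LinearMap.ker (ConcreteCategory.hom f.hom : Y →ₗ[ℂ] W)).subtype) (fun γ v => rfl)
      have hκ : κ ≫ f = (0 : K ⟶ Y) ≫ f := by
        rw [Limits.zero_comp, hom_eq_zero_iff, Action.comp_hom]
        ext x
        exact x.2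
      have hκ0 : κ = 0 := hm.right_cancellation _ _ hκ
      rw [hom_eq_zero_iff] at hκ0
      rw [← LinearMap.ker_eq_bot, Submodule.eq_bot_iff]
      intro x hx
      have hx0 := congrArg (fun q : _ →ₗ[ℂ] Y => q ⟨x, hx⟩) hκ0
      exact hx0.trans (LinearMap.zero_apply _)
    -- range is invariant and nonzero, hence everything
    have hR : ∀ (γ : Γ), ∀ x ∈ LinearMap.range (ConcreteCategory.hom f.hom : Y →ₗ[ℂ] W), σ γ x ∈ LinearMap.range (ConcreteCategory.hom f.hom : Y →ₗ[ℂ] W) := by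
      rintro γ x ⟨y, rfl⟩
      exact ⟨Y.ρ γ y, (hom_equivariant f γ y)⟩
    rcases hirr _ hR with hbot | htop
    · exfalso
      apply hf0
      rw [hom_eq_zero_iff]
      ext y
      have : f.hom y ∈ LinearMap.range (ConcreteCategory.hom f.hom : Y →ₗ[ℂ] W) := ⟨y, rfl⟩
      rw [hbot] at this
      simpa using this
    · have hbij : Function.Bijective (ConcreteCategory.hom f.hom : Y →ₗ[ℂ] W) :=
        ⟨hinj, LinearMap.range_eq_top.mp htop⟩
      let e : Y ≃ₗ[ℂ] W := LinearEquiv.ofBijective _ hbij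
      have hgeq : ∀ (γ : Γ) (w : W), (e.symm : W →ₗ[ℂ] Y) (σ γ w) = Y.ρ γ ((e.symm : W →ₗ[ℂ] Y) w) := by
        intro γ w
        apply hbij.1
        have hL : (ConcreteCategory.hom f.hom : Y →ₗ[ℂ] W) ((e.symm : W →ₗ[ℂ] Y) (σ γ w)) = σ γ w :=
          e.apply_symm_apply _
        have hR : (ConcreteCategory.hom f.hom : Y →ₗ[ℂ] W) (Y.ρ γ ((e.symm : W →ₗ[ℂ] Y) w)) =
            σ γ ((ConcreteCategory.hom f.hom : Y →ₗ[ℂ] W) ((e.symm : W →ₗ[ℂ] Y) w)) := hom_equivariant f γ _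
        have hW : (ConcreteCategory.hom f.hom : Y →ₗ[ℂ] W) ((e.symm : W →ₗ[ℂ] Y) w) = w := e.apply_symm_apply _
        show (ConcreteCategory.hom f.hom : Y →ₗ[ℂ] W) ((e.symm : W →ₗ[ℂ] Y) (σ γ w)) =
          (ConcreteCategory.hom f.hom : Y →ₗ[ℂ] W) (Y.ρ γ ((e.symm : W →ₗ[ℂ] Y) w))
        rw [hL, hR, hW]
      let g : FDRep.of σ ⟶ Y := homOfEquiv (e.symm : W →ₗ[ℂ] Y) hgeq
      refine ⟨⟨g, ?_, ?_⟩⟩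
      · apply Action.hom_ext
        ext v
        exact e.symm_apply_apply v
      · apply Action.hom_ext
        ext w
        exact e.apply_symm_apply w

theorem iso_bijective {X Y : FDRep ℂ Γ} (e : X ≅ Y) :
    Function.Bijective (ConcreteCategory.hom e.hom.hom : X →ₗ[ℂ] Y) := by
  constructor
  · intro x y hxy
    have h1 := congrArg (fun q : X ⟶ X => (q.hom : X → X) x) e.hom_inv_id
    have h2 := congrArg (fun q : X ⟶ X => (q.hom : X → X) y) e.hom_inv_id
    simp only [Action.comp_hom, Action.id_hom] at h1 h2
    have h1' : e.inv.hom (e.hom.hom x) = x := h1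
    have h2' : e.inv.hom (e.hom.hom y) = y := h2
    rw [← h1', ← h2']
    exact congrArg _ hxy
  · intro y
    have h1 := congrArg (fun q : Y ⟶ Y => (q.hom : Y → Y) y) e.inv_hom_id
    simp only [Action.comp_hom, Action.id_hom] at h1
    exact ⟨e.inv.hom y, h1⟩


/-- L1: fiberwise dimension bound. -/
theorem sum_finrank_le [Fintype Γ] {ι : Type} (R : ι → FDRep ℂ Γ)
    (hsimple : ∀ i, Simple (R i)) (hinj : ∀ i j, Nonempty (R i ≅ R j) → i = j)
    (S : Finset ι) :
    ∀ (W : Type) [AddCommGroup W] [Module ℂ W] [FiniteDimensional ℂ W]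
      (τ : Representation ℂ Γ W) (f : ∀ j, R j →ₗ[ℂ] W),
      (∀ j ∈ S, f j ≠ 0) →
      (∀ j ∈ S, ∀ (γ : Γ) (v : R j), f j ((R j).ρ γ v) = τ γ (f j v)) →
      ∑ j ∈ S, Module.finrank ℂ (R j) ≤ Module.finrank ℂ W := by
  classical
  induction S using Finset.induction_on with
  | empty => intro W _ _ _ τ f _ _; simp
  | @insert a s ha IH =>
    intro W _ _ _ τ f hf0 hfeq
    have hain : a ∈ insert a s := Finset.mem_insert_self a s
    have hfa := hf0 a hain
    have hfaeq := hfeq a hain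
    haveI := hsimple a
    -- f a is injective
    have hinja : Function.Injective (f a) := by
      have hK : ∀ (γ : Γ), ∀ x ∈ LinearMap.ker (f a), (R a).ρ γ x ∈ LinearMap.ker (f a) := by
        intro γ x hx
        rw [LinearMap.mem_ker] at hx ⊢
        exact (hfaeq γ x).trans (by rw [hx, map_zero])
      rcases (isIrred_of_simple (R a)).2 _ hK with hbot | htop
      · exact LinearMap.ker_eq_bot.mp hbot
      · exact absurd (LinearMap.ker_eq_top.mp htop) hfa
    -- Maschke retraction
    obtain ⟨π, hπeq, hπret⟩ :=
      exists_equivariant_retraction (R a).ρ τ (f a) hfaeq hinja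
    -- the kernel of π
    set K : Submodule ℂ W := LinearMap.ker π with hKdef
    have hKinv : ∀ (γ : Γ), ∀ x ∈ K, τ γ x ∈ K := by
      intro γ x hx
      rw [hKdef, LinearMap.mem_ker] at hx ⊢
      rw [hπeq γ x, hx, map_zero]
    -- dimension count
    have hπsurj : Function.Surjective π := fun v => ⟨f a v, hπret v⟩
    have hdim : Module.finrank ℂ W = Module.finrank ℂ (R a) + Module.finrank ℂ K := by
      have := LinearMap.finrank_range_add_finrank_ker π
      rw [LinearMap.range_eq_top.mpr hπsurj, finrank_top] at this
      exact this.symm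
    -- the projection p onto K
    set p : W →ₗ[ℂ] W := LinearMap.id - (f a).comp π with hpdef
    have hpK : ∀ w, p w ∈ K := by
      intro w
      rw [hKdef, LinearMap.mem_ker]
      simp [hpdef, hπret]
    have hpeq : ∀ (γ : Γ) (w : W), p (τ γ w) = τ γ (p w) := by
      intro γ w
      simp only [hpdef, LinearMap.sub_apply, LinearMap.id_apply, LinearMap.comp_apply,
        hπeq γ w, map_sub, hfaeq γ (π w)]
    -- restricted maps
    set g : ∀ j, (R j : Type) →ₗ[ℂ] K := fun j => (p.comp (f j)).codRestrict K (fun v => hpK _)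
      with hgdef
    have hgeq : ∀ j ∈ s, ∀ (γ : Γ) (v : R j),
        g j ((R j).ρ γ v) = (subrep τ K hKinv) γ (g j v) := by
      intro j hj γ v
      apply Subtype.ext
      show p (f j ((R j).ρ γ v)) = τ γ (p (f j v))
      rw [hfeq j (Finset.mem_insert_of_mem hj) γ v, hpeq γ (f j v)]
    have hg0 : ∀ j ∈ s, g j ≠ 0 := by
      intro j hj hgj
      have hpfj : ∀ v, p (f j v) = 0 := by
        intro v
        have h := congrArg (fun q : (R j : Type) →ₗ[ℂ] K => (q v : W)) hgj
        exact h.trans (by simp)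
      -- then f j = f a ∘ π ∘ f j
      have hfj : ∀ v, f j v = f a (π (f j v)) := by
        intro v
        have := hpfj v
        simp only [hpdef, LinearMap.sub_apply, LinearMap.id_apply, LinearMap.comp_apply,
          sub_eq_zero] at this
        exact this
      haveI := hsimple j
      have hq : π.comp (f j) = 0 := by
        apply equivariant_eq_zero (X := R j) (Y := R a)
        · intro he
          exact ha (hinj j a he ▸ hj)
        · intro γ v
          show π (f j ((R j).ρ γ v)) = (R a).ρ γ (π (f j v))
          rw [hfeq j (Finset.mem_insert_of_mem hj) γ v, hπeq γ (f j v)]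
      apply hf0 j (Finset.mem_insert_of_mem hj)
      ext v
      have : π (f j v) = 0 := congrArg (fun q : (R j : Type) →ₗ[ℂ] R a => q v) hq
      rw [LinearMap.zero_apply, hfj v, this, map_zero]
    have hrec := IH K (subrep τ K hKinv) g hg0 hgeq
    rw [Finset.sum_insert ha, hdim]
    omega


/-- L2: a nonzero `H`-map into the restriction of a `G`-representation can be pushed
into the restriction of some member of a complete family of simple `G`-representations. -/
theorem exists_simple_target {G : Type} [Group G] [Fintype G] (H : Subgroup G)
    {ιG : Type} (RG : ιG → FDRep ℂ G)
    (hGsurj : ∀ V : FDRep ℂ G, Simple V → ∃ i, Nonempty (RG i ≅ V))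
    {V : Type} [AddCommGroup V] [Module ℂ V] (ρ : Representation ℂ ↥H V) (n : ℕ) :
    ∀ (W : Type) [AddCommGroup W] [Module ℂ W] [FiniteDimensional ℂ W]
      (τ : Representation ℂ G W), Module.finrank ℂ W ≤ n →
      ∀ (T : V →ₗ[ℂ] W), T ≠ 0 → (∀ (h : ↥H) (v : V), T (ρ h v) = τ (h : G) (T v)) →
      ∃ (i : ιG) (T' : V →ₗ[ℂ] RG i), T' ≠ 0 ∧
        ∀ (h : ↥H) (v : V), T' (ρ h v) = (RG i).ρ (h : G) (T' v) := by
  induction n with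
  | zero =>
    intro W _ _ _ τ hn T hT0 _
    exfalso
    apply hT0
    have hW : Subsingleton W :=
      Module.finrank_zero_iff.mp (Nat.le_zero.mp hn)
    ext v
    exact Subsingleton.elim _ _
  | succ n IH =>
    intro W _ _ _ τ hn T hT0 hTeq
    by_cases hirr : ∀ (U : Submodule ℂ W), (∀ (g : G), ∀ x ∈ U, τ g x ∈ U) → U = ⊥ ∨ U = ⊤
    · -- irreducible case
      have hnt : Nontrivial W := by
        obtain ⟨v, hv⟩ : ∃ v, T v ≠ 0 := by
          by_contra hforall
          push_neg at hforall
          exact hT0 (LinearMap.ext hforall)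
        exact nontrivial_of_ne _ _ (by simpa using hv)
      haveI := simple_of_isIrred τ ⟨hnt, hirr⟩
      obtain ⟨i, ⟨e⟩⟩ := hGsurj (FDRep.of τ) inferInstance
      have hbij := iso_bijective e
      set F : (RG i : Type) →ₗ[ℂ] W := (ConcreteCategory.hom e.hom.hom : (RG i : Type) →ₗ[ℂ] W) with hF
      set E : (RG i : Type) ≃ₗ[ℂ] W := LinearEquiv.ofBijective F hbij with hE
      refine ⟨i, (E.symm : W →ₗ[ℂ] (RG i : Type)).comp T, ?_, ?_⟩
      · intro h0
        apply hT0
        ext v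
        have h5 := congrArg (fun q : V →ₗ[ℂ] (RG i : Type) => q v) h0
        simp only [LinearMap.comp_apply, LinearMap.zero_apply] at h5 ⊢
        have h4 : E (E.symm (T v)) = T v := E.apply_symm_apply _
        rw [← h4, show E.symm (T v) = 0 from h5, map_zero]
      · intro h v
        apply E.injective
        have h1 : E (E.symm (T (ρ h v))) = T (ρ h v) := E.apply_symm_apply _
        have h3 : E ((RG i).ρ (h : G) (E.symm (T v))) = τ (h : G) (E (E.symm (T v))) :=
          hom_equivariant e.hom (h : G) (E.symm (T v))
        show E (E.symm (T (ρ h v))) = E ((RG i).ρ (h : G) (E.symm (T v)))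
        rw [h1, h3, E.apply_symm_apply, hTeq h v]
    · push_neg at hirr
      obtain ⟨U, hUinv, hUbot, hUtop⟩ := hirr
      set σU : Representation ℂ G U := subrep τ U hUinv with hσU
      obtain ⟨π, hπeq, hπret⟩ :=
        exists_equivariant_retraction σU τ U.subtype (fun γ v => rfl) U.injective_subtype
      have hUpos : 0 < Module.finrank ℂ U := by
        rw [Nat.pos_iff_ne_zero]
        intro h0
        exact hUbot (Submodule.finrank_eq_zero.mp h0)
      have hUlt : Module.finrank ℂ U < Module.finrank ℂ W :=
        Submodule.finrank_lt hUtop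
      by_cases hπT : π.comp T = 0
      · -- push into the kernel of π
        set K : Submodule ℂ W := LinearMap.ker π with hK
        have hKinv : ∀ (g : G), ∀ x ∈ K, τ g x ∈ K := by
          intro g x hx
          rw [hK, LinearMap.mem_ker] at hx ⊢
          rw [hπeq g x, hx, map_zero]
        have hTK : ∀ v, T v ∈ K := by
          intro v
          rw [hK, LinearMap.mem_ker]
          exact congrArg (fun q : V →ₗ[ℂ] U => q v) hπT
        set T'' : V →ₗ[ℂ] K := T.codRestrict K hTK with hT''
        have hdim : Module.finrank ℂ W = Module.finrank ℂ U + Module.finrank ℂ K := by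
          have h5 := LinearMap.finrank_range_add_finrank_ker π
          have hsurj : Function.Surjective π := fun u => ⟨U.subtype u, hπret u⟩
          rw [LinearMap.range_eq_top.mpr hsurj, finrank_top] at h5
          exact h5.symm
        have hKn : Module.finrank ℂ K ≤ n := by omega
        refine IH K (subrep τ K hKinv) hKn T'' ?_ ?_
        · intro h0
          apply hT0
          ext v
          have := congrArg (fun q : V →ₗ[ℂ] K => (q v : W)) h0
          exact this.trans (by simp)
        · intro h v
          apply Subtype.ext
          show T (ρ h v) = τ (h : G) (T v)
          exact hTeq h v
      · -- push into U
        have hUn : Module.finrank ℂ U ≤ n := by omega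
        refine IH U σU hUn (π.comp T) hπT ?_
        intro h v
        simp only [LinearMap.comp_apply]
        rw [hTeq h v, hπeq (h : G) (T v)]

theorem exists_nonzero_equivariant_to_regular {G : Type} [Group G] [Fintype G] (H : Subgroup G)
    {V : Type} [AddCommGroup V] [Module ℂ V] [FiniteDimensional ℂ V] [Nontrivial V]
    (ρ : Representation ℂ ↥H V) :
    ∃ T : V →ₗ[ℂ] (MonoidAlgebra ℂ G), T ≠ 0 ∧
      ∀ (h : ↥H) (v : V), T (ρ h v) = (Representation.ofMulAction ℂ G G) (h : G) (T v) := by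
  classical
  haveI : Fintype ↥H := Fintype.ofFinite ↥H
  obtain ⟨v₀, hv₀⟩ := exists_ne (0 : V)
  obtain ⟨φ, hφ⟩ : ∃ φ : V →ₗ[ℂ] ℂ, φ v₀ ≠ 0 := by
    by_contra hc
    push_neg at hc
    exact hv₀ ((Module.forall_dual_apply_eq_zero_iff ℂ v₀).mp hc)
  set T : V →ₗ[ℂ] (MonoidAlgebra ℂ G) :=
    ∑ h : ↥H, (MonoidAlgebra.lsingle ((h : G))).comp (φ.comp (ρ h⁻¹)) with hT
  have hTapp : ∀ v, T v = ∑ h : ↥H, MonoidAlgebra.single (h : G) (φ (ρ h⁻¹ v)) := by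
    intro v
    rw [hT]
    simp [LinearMap.sum_apply]
  refine ⟨T, ?_, ?_⟩
  · intro h0
    have h1 : (T v₀).coeff (1 : G) = φ v₀ := by
      rw [hTapp]
      rw [MonoidAlgebra.coeff_sum, Finsupp.finset_sum_apply]
      rw [Finset.sum_eq_single (1 : ↥H)]
      · simp
      · intro h _ hne
        rw [MonoidAlgebra.coeff_single, Finsupp.single_apply, if_neg]
        intro hc
        exact hne (by simpa using hc)
      · simp
    rw [h0] at h1
    simp at h1
    exact hφ h1.symm
  · intro h₀ v
    rw [hTapp, hTapp, map_sum]
    have hterm : ∀ h : ↥H,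
        (Representation.ofMulAction ℂ G G) (h₀ : G) (MonoidAlgebra.single (h : G) (φ (ρ h⁻¹ v)))
          = MonoidAlgebra.single ((h₀ : G) * (h : G)) (φ (ρ h⁻¹ v)) := by
      intro h
      rw [Representation.ofMulAction_single]
      rfl
    rw [Finset.sum_congr rfl (fun h _ => hterm h)]
    refine (Fintype.sum_bijective (fun h => h₀ * h) (Group.mulLeft_bijective h₀) _ _
      fun h => ?_).symm
    have h2 : ((h₀ * h : ↥H) : G) = (h₀ : G) * (h : G) := rfl
    have h3 : ρ (h₀ * h)⁻¹ (ρ h₀ v) = ρ ((h₀ * h)⁻¹ * h₀) v := by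
      rw [map_mul ρ (h₀ * h)⁻¹ h₀]; rfl
    have h4 : ((h₀ * h)⁻¹ * h₀ : ↥H) = h⁻¹ := by group
    rw [h2, h3, h4]

theorem nnreal_sum_rpow_le {ι : Type} (s : Finset ι) (b : ι → NNReal) {p : ℝ} (hp : 1 ≤ p) :
    ∑ j ∈ s, b j ^ p ≤ (∑ j ∈ s, b j) ^ p := by
  classical
  induction s using Finset.induction_on with
  | empty => simp [NNReal.zero_rpow (by positivity : p ≠ 0)]
  | @insert a s ha IH =>
    rw [Finset.sum_insert ha, Finset.sum_insert ha]
    calc b a ^ p + ∑ j ∈ s, b j ^ p ≤ b a ^ p + (∑ j ∈ s, b j) ^ p := by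
          exact add_le_add le_rfl IH
      _ ≤ (b a + ∑ j ∈ s, b j) ^ p := NNReal.add_rpow_le_rpow_add _ _ hp


end DSM

/-- Monotonicity of `A_p` (Lemma `lm-incr` of Kowalski, "The principle of the
large sieve"): if `H ≤ G` are finite groups then
`A_p(H) ≤ A_p(G)` for `1 ≤ p < ∞`, and `A_∞(H) ≤ A_∞(G)`.
The irreducible representations are given by complete irredundant families
`RH`, `RG` of simple objects of `FDRep ℂ H`, `FDRep ℂ G`. -/
theorem degree_sum_monotone
    {G : Type} [Group G] [Fintype G] (H : Subgroup G)
    {ιG ιH : Type} [Fintype ιG] [Fintype ιH]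
    (RG : ιG → FDRep ℂ G) (RH : ιH → FDRep ℂ H)
    (hGsimple : ∀ i, Simple (RG i))
    (hGinj : ∀ i j, Nonempty (RG i ≅ RG j) → i = j)
    (hGsurj : ∀ V : FDRep ℂ G, Simple V → ∃ i, Nonempty (RG i ≅ V))
    (hHsimple : ∀ i, Simple (RH i))
    (hHinj : ∀ i j, Nonempty (RH i ≅ RH j) → i = j)
    (hHsurj : ∀ V : FDRep ℂ H, Simple V → ∃ i, Nonempty (RH i ≅ V))
    (p : ℝ) (hp : 1 ≤ p) :
    (∑ i, (Module.finrank ℂ (RH i) : ℝ) ^ p) ^ (1 / p)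
      ≤ (∑ i, (Module.finrank ℂ (RG i) : ℝ) ^ p) ^ (1 / p)
    ∧ Finset.univ.sup (fun i => Module.finrank ℂ (RH i))
      ≤ Finset.univ.sup (fun i => Module.finrank ℂ (RG i)) := by
  classical
  haveI : Fintype ↥H := Fintype.ofFinite ↥H
  -- choose a target irreducible `π j` for each `j`
  have hch : ∀ j : ιH, ∃ (i : ιG) (T' : (RH j : Type) →ₗ[ℂ] RG i), T' ≠ 0 ∧
      ∀ (h : ↥H) (v : (RH j : Type)), T' ((RH j).ρ h v) = (RG i).ρ (h : G) (T' v) := by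
    intro j
    haveI := hHsimple j
    haveI : Nontrivial (RH j : Type) := DSM.nontrivial_of_simple (RH j)
    haveI : FiniteDimensional ℂ (MonoidAlgebra ℂ G) :=
      Module.Finite.equiv ((MonoidAlgebra.coeffLinearEquiv ℂ).trans (Finsupp.linearEquivFunOnFinite ℂ ℂ G)).symm
    obtain ⟨T, hT0, hTeq⟩ := DSM.exists_nonzero_equivariant_to_regular H (RH j).ρ
    exact DSM.exists_simple_target H RG hGsurj (RH j).ρ (Module.finrank ℂ (MonoidAlgebra ℂ G))
      (MonoidAlgebra ℂ G) (Representation.ofMulAction ℂ G G) le_rfl T hT0 hTeq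
  choose π F hF0 hFeq using hch
  -- the key fiberwise inequality
  have key : ∀ i : ιG, ∑ j ∈ univ.filter (fun j => π j = i), Module.finrank ℂ (RH j)
      ≤ Module.finrank ℂ (RG i) := by
    intro i
    refine DSM.sum_finrank_le RH hHsimple hHinj (univ.filter (fun j => π j = i))
      (RG i : Type) ((RG i).ρ.comp H.subtype)
      (fun j => if hj : π j = i then hj ▸ F j else 0) ?_ ?_
    · intro j hj
      rw [Finset.mem_filter] at hj
      obtain ⟨-, hji⟩ := hj
      subst hji
      show (if hj : π j = π j then (hj ▸ F j : (RH j : Type) →ₗ[ℂ] RG (π j)) else 0) ≠ 0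
      rw [dif_pos rfl]
      exact hF0 j
    · intro j hj γ v
      rw [Finset.mem_filter] at hj
      obtain ⟨-, hji⟩ := hj
      subst hji
      show (if hj : π j = π j then (hj ▸ F j : (RH j : Type) →ₗ[ℂ] RG (π j)) else 0) ((RH j).ρ γ v)
        = ((RG (π j)).ρ.comp H.subtype) γ
          ((if hj : π j = π j then (hj ▸ F j : (RH j : Type) →ₗ[ℂ] RG (π j)) else 0) v)
      rw [dif_pos rfl]
      exact hFeq j γ v
  -- the sup statement
  have hsup : ∀ j, Module.finrank ℂ (RH j) ≤ Module.finrank ℂ (RG (π j)) := by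
    intro j
    refine le_trans ?_ (key (π j))
    exact Finset.single_le_sum (f := fun j => Module.finrank ℂ (RH j))
      (fun _ _ => Nat.zero_le _) (by simp)
  refine ⟨?_, Finset.sup_le fun j _ => le_trans (hsup j) (Finset.le_sup (f := fun i => Module.finrank ℂ (RG i)) (Finset.mem_univ (π j)))⟩
  -- the sum statement, first in ℝ≥0
  have key2 : ∀ i : ιG, ∑ j ∈ univ.filter (fun j => π j = i),
      ((Module.finrank ℂ (RH j) : NNReal)) ^ p ≤ ((Module.finrank ℂ (RG i) : NNReal)) ^ p := by
    intro i
    calc ∑ j ∈ univ.filter (fun j => π j = i), ((Module.finrank ℂ (RH j) : NNReal)) ^ p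
        ≤ (∑ j ∈ univ.filter (fun j => π j = i), (Module.finrank ℂ (RH j) : NNReal)) ^ p :=
          DSM.nnreal_sum_rpow_le _ _ hp
      _ ≤ ((Module.finrank ℂ (RG i) : NNReal)) ^ p := by
          refine NNReal.rpow_le_rpow ?_ (le_trans zero_le_one hp)
          rw [← Nat.cast_sum]
          exact_mod_cast key i
  have main : ∑ j : ιH, ((Module.finrank ℂ (RH j) : NNReal)) ^ p
      ≤ ∑ i : ιG, ((Module.finrank ℂ (RG i) : NNReal)) ^ p := by
    rw [← Finset.sum_fiberwise univ π (fun j => ((Module.finrank ℂ (RH j) : NNReal)) ^ p)]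
    exact Finset.sum_le_sum fun i _ => key2 i
  -- coerce to ℝ
  have cast1 : (∑ i, (Module.finrank ℂ (RH i) : ℝ) ^ p)
      = ((∑ i, ((Module.finrank ℂ (RH i) : NNReal)) ^ p : NNReal) : ℝ) := by
    push_cast [NNReal.coe_rpow]
    rfl
  have cast2 : (∑ i, (Module.finrank ℂ (RG i) : ℝ) ^ p)
      = ((∑ i, ((Module.finrank ℂ (RG i) : NNReal)) ^ p : NNReal) : ℝ) := by
    push_cast [NNReal.coe_rpow]
    rfl
  rw [cast1, cast2]
  refine Real.rpow_le_rpow (by positivity) ?_ (by positivity)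
  exact_mod_cast main
end

section
/- Spectral gap from an odd relation: let π: Γ → U(V) be a unitary representation of a group Γ on a complex inner product space V, S ⊂ Γ a finite symmetric generating set, and M = (1/|S|)∑_{s∈S} π(s). Suppose s_1 ⋯ s_c = 1 in Γ with all s_i ∈ S and c odd. Then for every v ∈ V, ‖v‖² ≤ (c²|S|/2)·⟨(Id + M)v, v⟩; consequently every eigenvalue λ of the self-adjoint operator M satisfies λ ≥ −1 + 2/(c²|S|). -/
open Finset

lemma alt_sum_telescope {V : Type*} [AddCommGroup V] [Module ℝ V] (x : ℕ → V) (n : ℕ) :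
    ∑ i ∈ Finset.range n, ((-1 : ℝ) ^ i) • (x i + x (i + 1))
      = x 0 - ((-1 : ℝ) ^ n) • x n := by
  induction n with
  | zero => simp
  | succ n ih =>
    rw [Finset.sum_range_succ, ih, pow_succ]
    simp [smul_add, sub_add_eq_add_sub, mul_smul]
    abel

set_option maxHeartbeats 1000000 in
/-- Spectral gap from an odd relation (part of the proof of Proposition 9.4 /
`pr-tau` of Kowalski, "The principle of the large sieve"): if `π` is a unitary
representation of `Γ`, `S` a finite symmetric set, `M = |S|⁻¹ ∑_{s∈S} π(s)` the
averaging operator, and there is a relation `s₁⋯s_c = 1` of odd length `c` with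
`sᵢ ∈ S`, then `‖v‖² ≤ (c²|S|/2)⟨(Id+M)v, v⟩` for all `v`, and every eigenvalue
of the self-adjoint operator `M` is real and `≥ −1 + 2/(c²|S|)`. -/
theorem odd_relation_spectral_gap
    {Γ : Type*} [Group Γ] {V : Type*} [NormedAddCommGroup V]
    [InnerProductSpace ℂ V] [FiniteDimensional ℂ V]
    (π : Γ →* (V ≃ₗᵢ[ℂ] V)) (S : Finset Γ) (hS : S.Nonempty)
    (hsym : ∀ s ∈ S, s⁻¹ ∈ S)
    (c : ℕ) (hodd : Odd c) (w : Fin c → Γ) (hw : ∀ i, w i ∈ S)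
    (hrel : (List.ofFn w).prod = 1) :
    (∀ v : V, ‖v‖ ^ 2 ≤ ((c : ℝ) ^ 2 * S.card / 2) *
      (@inner ℂ V _
        (v + ((S.card : ℂ)⁻¹ • ∑ s ∈ S, ((π s).toLinearEquiv : V →ₗ[ℂ] V)) v)
        v).re)
    ∧ ∀ μ : ℂ, Module.End.HasEigenvalue
        ((S.card : ℂ)⁻¹ • ∑ s ∈ S, ((π s).toLinearEquiv : V →ₗ[ℂ] V)) μ →
      μ.im = 0 ∧ (-1 + 2 / ((c : ℝ) ^ 2 * S.card)) ≤ μ.re := by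
  classical
  set M : V →ₗ[ℂ] V := (S.card : ℂ)⁻¹ • ∑ s ∈ S, ((π s).toLinearEquiv : V →ₗ[ℂ] V) with hM
  have hc1 : 0 < c := hodd.pos
  have hSpos : (0:ℝ) < S.card := by exact_mod_cast Finset.card_pos.mpr hS
  have hSne : ((S.card:ℝ)) ≠ 0 := ne_of_gt hSpos
  have hMapply : ∀ v : V, M v = (S.card:ℂ)⁻¹ • ∑ s ∈ S, π s v := by
    intro v; simp [hM, LinearMap.sum_apply]
  -- the energy identity
  have key : ∀ v : V, ∑ s ∈ S, ‖v + π s v‖^2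
      = 2 * S.card * (@inner ℂ V _ (v + M v) v).re := by
    intro v
    have h1 : ∀ s ∈ S, ‖v + π s v‖^2
        = 2*‖v‖^2 + 2*(@inner ℂ V _ (π s v) v).re := by
      intro s _
      have h0 := @norm_add_sq ℂ V _ _ _ v (π s v)
      have h2 := inner_re_symm (𝕜 := ℂ) v (π s v)
      simp only [RCLike.re_to_complex] at h0 h2
      rw [h0, (π s).norm_map, h2]; ring
    rw [Finset.sum_congr rfl h1]
    have h3 : (@inner ℂ V _ (v + M v) v)
        = (‖v‖:ℂ)^2 + (S.card:ℂ)⁻¹ * ∑ s ∈ S, @inner ℂ V _ (π s v) v := by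
      rw [inner_add_left, hMapply, inner_smul_left, sum_inner, inner_self_eq_norm_sq_to_K]
      simp
    rw [h3, show ((‖v‖:ℂ))^2 = ((‖v‖^2 : ℝ) : ℂ) by push_cast; ring,
        show ((S.card:ℂ))⁻¹ = (((S.card:ℝ)⁻¹ : ℝ) : ℂ) by push_cast; ring]
    simp only [Complex.add_re, Complex.ofReal_re, Complex.re_ofReal_mul, Complex.re_sum]
    rw [Finset.sum_add_distrib, Finset.sum_const, ← Finset.mul_sum]
    field_simp
    ring
  -- inner products are nonnegative on the diagonal direction
  have innerNN : ∀ v : V, 0 ≤ (@inner ℂ V _ (v + M v) v).re := by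
    intro v
    have h := key v
    have h2 : 0 ≤ ∑ s ∈ S, ‖v + π s v‖^2 :=
      Finset.sum_nonneg fun s _ => by positivity
    nlinarith [h2, hSpos]
  -- Part A
  have partA : ∀ v : V, ‖v‖ ^ 2 ≤ ((c : ℝ) ^ 2 * S.card / 2) *
      (@inner ℂ V _ (v + M v) v).re := by
    intro v
    -- prefix products
    set p : ℕ → Γ := fun i => ((List.ofFn w).take i).prod with hp
    set x : ℕ → V := fun i => π (p i) v with hx
    have hx0 : x 0 = v := by simp [hx, hp]
    have hxc : x c = v := by
      have : p c = 1 := by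
        rw [hp]
        simp only [List.take_of_length_le (by simp : (List.ofFn w).length ≤ c)]
        exact hrel
      simp [hx, this]
    have hxstep : ∀ i (hi : i < c), x i + x (i+1) = π (p i) (v + π (w ⟨i, hi⟩) v) := by
      intro i hi
      have hlen : i < (List.ofFn w).length := by simpa [List.length_ofFn] using hi
      have hps : p (i+1) = p i * w ⟨i, hi⟩ := by
        rw [hp]
        simp only
        rw [List.prod_take_succ _ _ hlen]
        congr 1
        simp [List.get_ofFn]
      have : x (i+1) = π (p i) (π (w ⟨i, hi⟩) v) := by
        rw [hx]
        simp only [hps, map_mul]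
        rw [LinearIsometryEquiv.coe_mul]
        rfl
      rw [this, map_add, hx]
    -- telescoping
    have tele : ∑ i ∈ Finset.range c, ((-1 : ℝ) ^ i) • (x i + x (i + 1)) = v + v := by
      rw [alt_sum_telescope, hx0, hxc, hodd.neg_one_pow]
      simp
    have step1 : 2 * ‖v‖ ≤ ∑ i ∈ Finset.range c, ‖x i + x (i+1)‖ := by
      calc 2 * ‖v‖ = ‖v + v‖ := by
            rw [← two_smul ℝ v, norm_smul]; simp
        _ = ‖∑ i ∈ Finset.range c, ((-1 : ℝ) ^ i) • (x i + x (i + 1))‖ := by rw [tele]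
        _ ≤ ∑ i ∈ Finset.range c, ‖((-1 : ℝ) ^ i) • (x i + x (i + 1))‖ :=
            norm_sum_le _ _
        _ = ∑ i ∈ Finset.range c, ‖x i + x (i+1)‖ := by
            refine Finset.sum_congr rfl fun i _ => ?_
            rw [norm_smul]
            simp [abs_pow]
    set T := ∑ s ∈ S, ‖v + π s v‖^2 with hT
    have hterm : ∀ i ∈ Finset.range c, ‖x i + x (i+1)‖^2 ≤ T := by
      intro i hi
      have hic := Finset.mem_range.mp hi
      have he : ‖x i + x (i+1)‖ = ‖v + π (w ⟨i, hic⟩) v‖ := by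
        rw [hxstep i hic, LinearIsometryEquiv.norm_map]
      rw [he, hT]
      exact Finset.single_le_sum (f := fun s => ‖v + π s v‖^2)
        (fun s _ => by positivity) (hw ⟨i, hic⟩)
    have cs : (∑ i ∈ Finset.range c, ‖x i + x (i+1)‖)^2
        ≤ (c:ℝ) * ∑ i ∈ Finset.range c, ‖x i + x (i+1)‖^2 := by
      have := sq_sum_le_card_mul_sum_sq (s := Finset.range c)
        (f := fun i => ‖x i + x (i+1)‖)
      simpa using this
    have hsum2 : ∑ i ∈ Finset.range c, ‖x i + x (i+1)‖^2 ≤ (c:ℝ) * T := by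
      calc ∑ i ∈ Finset.range c, ‖x i + x (i+1)‖^2
          ≤ ∑ _i ∈ Finset.range c, T := Finset.sum_le_sum hterm
        _ = (c:ℝ) * T := by simp [mul_comm]
    have hnn : (0:ℝ) ≤ ∑ i ∈ Finset.range c, ‖x i + x (i+1)‖ :=
      Finset.sum_nonneg fun i _ => norm_nonneg _
    have h4 : 4 * ‖v‖^2 ≤ (c:ℝ)^2 * T := by
      have h1 : (2 * ‖v‖)^2 ≤ (∑ i ∈ Finset.range c, ‖x i + x (i+1)‖)^2 := by
        apply sq_le_sq' <;> nlinarith [norm_nonneg v]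
      nlinarith [cs, hsum2, (Nat.cast_pos (α := ℝ)).mpr hc1]
    have hTval : T = 2 * S.card * (@inner ℂ V _ (v + M v) v).re := key v
    nlinarith [h4, hTval]
  refine ⟨partA, ?_⟩
  -- symmetry of M
  have hinv : ∀ (s : Γ) (x y : V),
      @inner ℂ V _ (π s x) y = @inner ℂ V _ x (π s⁻¹ y) := by
    intro s x y
    have hco : π s (π s⁻¹ y) = y := by
      have h1 : (π s) * (π s⁻¹) = 1 := by rw [← map_mul, mul_inv_cancel, map_one]
      calc π s (π s⁻¹ y) = ((π s) * (π s⁻¹)) y := by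
            rw [LinearIsometryEquiv.coe_mul]; rfl
        _ = y := by rw [h1]; rfl
    conv_rhs => rw [← (π s).inner_map_map x (π s⁻¹ y), hco]
  have hsymm : M.IsSymmetric := by
    intro x y
    have hMx : M x = (S.card:ℂ)⁻¹ • ∑ s ∈ S, π s x := hMapply x
    have hMy : M y = (S.card:ℂ)⁻¹ • ∑ s ∈ S, π s y := hMapply y
    rw [hMx, hMy, inner_smul_left, inner_smul_right, sum_inner, inner_sum]
    have hre : ∑ s ∈ S, @inner ℂ V _ (π s x) y = ∑ s ∈ S, @inner ℂ V _ x (π s y) := by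
      refine Finset.sum_bij' (fun s _ => s⁻¹) (fun s _ => s⁻¹)
        (fun s hs => hsym s hs) (fun s hs => hsym s hs)
        (fun s _ => inv_inv s) (fun s _ => inv_inv s) (fun s hs => ?_)
      rw [hinv]
    rw [hre]
    congr 1
    simp [Complex.conj_inv]
  intro μ hμ
  have him : μ.im = 0 := by
    have := hsymm.conj_eigenvalue_eq_self hμ
    exact Complex.conj_eq_iff_im.mp this
  refine ⟨him, ?_⟩
  obtain ⟨v, hv⟩ := hμ.exists_hasEigenvector
  have hv0 : v ≠ 0 := hv.2
  have hMv : M v = μ • v := hv.apply_eq_smul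
  have hA := partA v
  rw [hMv] at hA
  have hiv : (@inner ℂ V _ (v + μ • v) v).re = (1 + μ.re) * ‖v‖^2 := by
    have hre : (@inner ℂ V _ v v).re = ‖v‖^2 := by
      have := inner_self_eq_norm_sq (𝕜 := ℂ) v
      simpa using this
    have him0 : (@inner ℂ V _ v v).im = 0 := by
      exact inner_self_im (𝕜 := ℂ) v
    rw [inner_add_left, inner_smul_left]
    simp only [Complex.add_re, Complex.mul_re, hre, him0, Complex.conj_re,
      Complex.conj_im]
    ring
  rw [hiv] at hA
  have hvpos : (0:ℝ) < ‖v‖^2 := by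
    have := norm_pos_iff.mpr hv0
    positivity
  have hK : (0:ℝ) < (c:ℝ)^2 * S.card := by positivity
  have h1 : 1 * ‖v‖^2 ≤ ((c:ℝ)^2 * S.card / 2 * (1 + μ.re)) * ‖v‖^2 := by
    rw [one_mul]
    calc ‖v‖^2 ≤ (c:ℝ)^2 * S.card / 2 * ((1 + μ.re) * ‖v‖^2) := hA
      _ = ((c:ℝ)^2 * S.card / 2 * (1 + μ.re)) * ‖v‖^2 := by ring
  have h2 : 2 ≤ (c:ℝ)^2 * S.card * (1 + μ.re) := by
    have := le_of_mul_le_mul_right h1 hvpos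
    linarith
  have h3 : 2 / ((c:ℝ)^2 * S.card) ≤ 1 + μ.re := by
    rw [div_le_iff₀ hK]
    have := mul_comm ((c:ℝ)^2 * (S.card:ℝ)) (1 + μ.re)
    linarith
  linarith
end
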